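/- arXiv:2303.15146 — 8 statements merged into one kernel-verified Lean document; each statement's English description precedes it below -/
import Mathlib

section
/- Let A be a complex Banach algebra with identity and let a ∈ A. The following conditions are equivalent: (1) a is Hirano invertible; (2) a − a³ is nilpotent; (3) a is the sum of a tripotent and a nilpotent that commute with each other. -/
/-- An element of a ring is *Hirano invertible* if there exists `x` with
`a * x = x * a`, `x = x * a * x`, and `a ^ 2 - a * x` nilpotent. -/
def IsHirano {R : Type*} [Ring R] (a : R) : Prop :=
  ∃ x : R, a * x = x * a ∧ x = x * a * x ∧ IsNilpotent (a ^ 2 - a * x)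

/-- Lifting idempotents along nilpotents in a commutative ring, with control on
the correction term. -/
lemma lift_idem_aux {R : Type*} [CommRing R] :
    ∀ (k : ℕ) (u : R), (u ^ 2 - u) ^ (2 ^ k) = 0 →
      ∃ p c : R, p ^ 2 = p ∧ p - u = (u ^ 2 - u) * c := by
  intro k
  induction k with
  | zero =>
    intro u h
    have h0 : u ^ 2 - u = 0 := by simpa using h
    exact ⟨u, 0, by linear_combination h0, by ring⟩
  | succ k ih =>
    intro u h
    have hv : ((3 * u ^ 2 - 2 * u ^ 3) ^ 2 - (3 * u ^ 2 - 2 * u ^ 3)) ^ (2 ^ k) = 0 := by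
      have hrw : (3 * u ^ 2 - 2 * u ^ 3) ^ 2 - (3 * u ^ 2 - 2 * u ^ 3)
          = (u ^ 2 - u) ^ 2 * (4 * (u ^ 2 - u) - 3) := by ring
      rw [hrw, mul_pow, ← pow_mul]
      have h2 : 2 * 2 ^ k = 2 ^ (k + 1) := by
        rw [pow_succ, mul_comm]
      rw [h2, h, zero_mul]
    obtain ⟨p, c, hp, hpc⟩ := ih (3 * u ^ 2 - 2 * u ^ 3) hv
    exact ⟨p, (u ^ 2 - u) * (4 * (u ^ 2 - u) - 3) * c - (2 * u - 1), hp,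
      by linear_combination hpc⟩

/-- Lifting idempotents along nilpotents in a commutative ring. -/
lemma lift_idem {R : Type*} [CommRing R] (u : R) (h : IsNilpotent (u ^ 2 - u)) :
    ∃ p : R, p ^ 2 = p ∧ IsNilpotent (p - u) := by
  obtain ⟨m, hm⟩ := h
  have hm' : (u ^ 2 - u) ^ (2 ^ m) = 0 :=
    pow_eq_zero_of_le (Nat.le_of_lt (Nat.lt_two_pow_self (n := m))) hm
  obtain ⟨p, c, hp, hpc⟩ := lift_idem_aux m u hm'
  refine ⟨p, hp, ?_⟩
  rw [hpc]
  exact (Commute.all _ c).isNilpotent_mul_right ⟨2 ^ m, hm'⟩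

/-- In a commutative ring with `2` invertible, an element with `a - a ^ 3`
nilpotent is a tripotent plus a nilpotent. -/
lemma tripotent_decomp {R : Type*} [CommRing R] [Invertible (2 : R)] (a : R)
    (h : IsNilpotent (a - a ^ 3)) :
    ∃ e n : R, e ^ 3 = e ∧ IsNilpotent n ∧ e * n = n * e ∧ a = e + n := by
  have h2 : (2 : R) * ⅟ (2 : R) = 1 := mul_invOf_self 2
  have hn : IsNilpotent (a ^ 3 - a) := by
    have hrw : a ^ 3 - a = -(a - a ^ 3) := by ring
    rw [hrw]; exact h.neg
  set t := ⅟ (2 : R) with ht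
  have hnp : IsNilpotent ((t * (a ^ 2 + a)) ^ 2 - t * (a ^ 2 + a)) := by
    have hdp : (t * (a ^ 2 + a)) ^ 2 - t * (a ^ 2 + a)
        = (t * t) * ((a ^ 3 - a) * (a + 2)) := by
      linear_combination (t * (a ^ 2 + a)) * h2
    rw [hdp]
    exact (Commute.all _ _).isNilpotent_mul_left
      ((Commute.all _ _).isNilpotent_mul_right hn)
  have hnm : IsNilpotent ((t * (a ^ 2 - a)) ^ 2 - t * (a ^ 2 - a)) := by
    have hdm : (t * (a ^ 2 - a)) ^ 2 - t * (a ^ 2 - a)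
        = (t * t) * ((a ^ 3 - a) * (a - 2)) := by
      linear_combination (t * (a ^ 2 - a)) * h2
    rw [hdm]
    exact (Commute.all _ _).isNilpotent_mul_left
      ((Commute.all _ _).isNilpotent_mul_right hn)
  obtain ⟨p, hp, hpu⟩ := lift_idem _ hnp
  obtain ⟨q, hq, hqu⟩ := lift_idem _ hnm
  refine ⟨p - q, a - (p - q), ?_, ?_, mul_comm _ _, by ring⟩
  · -- tripotency of a difference of commuting idempotents
    linear_combination (p + 1 - 3 * q) * hp + (3 * p - q - 1) * hq
  · have hrw : a - (p - q) = (q - t * (a ^ 2 - a)) - (p - t * (a ^ 2 + a))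
        + a * (1 - 2 * t) := by ring
    have h1 : a * (1 - 2 * t) = 0 := by linear_combination (-a) * h2
    rw [hrw, h1, add_zero]
    exact (Commute.all _ _).isNilpotent_sub hqu hpu

/-- In a commutative ring, a commuting tripotent-plus-nilpotent is Hirano. -/
lemma hirano_of_comm {R : Type*} [CommRing R] (e n a : R) (he : e ^ 3 = e)
    (hn : IsNilpotent n) (ha : a = e + n) :
    ∃ x : R, a * x = x * a ∧ x = x * a * x ∧ IsNilpotent (a ^ 2 - a * x) := by
  obtain ⟨N, hN⟩ := hn
  have hEN : (-(e * n)) ^ N = 0 := by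
    rw [neg_pow, mul_pow, hN, mul_zero, mul_zero]
  set S : R := ∑ i ∈ Finset.range N, (-(e * n)) ^ i with hS
  have hgeom : S * (1 + e * n) = 1 := by
    have hg := geom_sum_mul (-(e * n)) N
    rw [hEN] at hg
    linear_combination (-1 : R) * hg
  have hax : a * (e * S) = e ^ 2 := by
    rw [ha]
    linear_combination e ^ 2 * hgeom - (n * S) * he
  refine ⟨e * S, mul_comm a (e * S), ?_, ?_⟩
  · linear_combination (-(e * S)) * hax - S * he
  · have hrw : a ^ 2 - a * (e * S) = n * (2 * e + n) := by
      rw [hax, ha]; ring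
    rw [hrw]
    exact (Commute.all _ _).isNilpotent_mul_right ⟨N, hN⟩

/-- Hirano implies `a - a ^ 3` nilpotent, in a commutative ring. -/
lemma hirano_nilpotent {R : Type*} [CommRing R] (a x : R) (hx : x = x * a * x)
    (hq : IsNilpotent (a ^ 2 - a * x)) : IsNilpotent (a - a ^ 3) := by
  have hp : (a * x) ^ 2 = a * x := by linear_combination (-a) * hx
  have hb2 : (a - a * (a * x)) ^ 2 = (a ^ 2 - a * x) * (1 - a * x) := by
    linear_combination (a ^ 2 - 1) * hp
  have hbnil : IsNilpotent (a - a * (a * x)) := by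
    have hsq : IsNilpotent ((a - a * (a * x)) ^ 2) := by
      rw [hb2]
      exact (Commute.all _ _).isNilpotent_mul_right hq
    obtain ⟨k, hk⟩ := hsq
    exact ⟨2 * k, by rw [pow_mul]; exact hk⟩
  have hfin : a - a ^ 3 = (a - a * (a * x)) - a * (a ^ 2 - a * x) := by ring
  rw [hfin]
  exact (Commute.all _ _).isNilpotent_sub hbnil
    ((Commute.all _ _).isNilpotent_mul_left hq)

/-- In a complex Banach algebra with identity, `a` is Hirano invertible iff
`a - a ^ 3` is nilpotent, iff `a` is the sum of a commuting tripotent and nilpotent. -/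
theorem hirano_tfae {A : Type*} [NormedRing A] [NormedAlgebra ℂ A] [CompleteSpace A]
    (a : A) :
    (IsHirano a ↔ IsNilpotent (a - a ^ 3)) ∧
    (IsHirano a ↔ ∃ e n : A, e ^ 3 = e ∧ IsNilpotent n ∧ e * n = n * e ∧ a = e + n) := by
  have h12 : IsHirano a → IsNilpotent (a - a ^ 3) := by
    rintro ⟨x, hc, hx, hq⟩
    have hcomm : ∀ y ∈ ({a, x} : Set A), ∀ z ∈ ({a, x} : Set A), y * z = z * y := by
      intro y hy z hz
      simp only [Set.mem_insert_iff, Set.mem_singleton_iff] at hy hz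
      rcases hy with rfl | rfl <;> rcases hz with rfl | rfl
      · rfl
      · exact hc
      · exact hc.symm
      · rfl
    have haS : a ∈ Algebra.adjoin ℂ ({a, x} : Set A) := Algebra.subset_adjoin (by simp)
    have hxS : x ∈ Algebra.adjoin ℂ ({a, x} : Set A) := Algebra.subset_adjoin (by simp)
    have hx' : (⟨x, hxS⟩ : Algebra.adjoin ℂ ({a, x} : Set A))
        = ⟨x, hxS⟩ * ⟨a, haS⟩ * ⟨x, hxS⟩ := Subtype.ext hx
    have hq' : IsNilpotent ((⟨a, haS⟩ : Algebra.adjoin ℂ ({a, x} : Set A)) ^ 2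
        - ⟨a, haS⟩ * ⟨x, hxS⟩) := by
      obtain ⟨k, hk⟩ := hq
      exact ⟨k, Subtype.ext (by push_cast; exact hk)⟩
    obtain ⟨k, hk⟩ :=
      @hirano_nilpotent _ (Algebra.adjoinCommRingOfComm ℂ hcomm) ⟨a, haS⟩ ⟨x, hxS⟩ hx' hq'
    refine ⟨k, ?_⟩
    have h2 := congrArg (Subtype.val) hk
    push_cast at h2
    exact h2
  have h23 : IsNilpotent (a - a ^ 3) →
      ∃ e n : A, e ^ 3 = e ∧ IsNilpotent n ∧ e * n = n * e ∧ a = e + n := by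
    intro h
    have hcomm : ∀ y ∈ ({a} : Set A), ∀ z ∈ ({a} : Set A), y * z = z * y := by
      intro y hy z hz
      simp only [Set.mem_singleton_iff] at hy hz
      subst hy; subst hz; rfl
    have haS : a ∈ Algebra.adjoin ℂ ({a} : Set A) := Algebra.subset_adjoin (by simp)
    have inv2 : Invertible (2 : Algebra.adjoin ℂ ({a} : Set A)) := by
      refine ⟨algebraMap ℂ _ (2⁻¹), ?_, ?_⟩
      · rw [← map_ofNat (algebraMap ℂ (Algebra.adjoin ℂ ({a} : Set A))) 2, ← map_mul]
        norm_num
      · rw [← map_ofNat (algebraMap ℂ (Algebra.adjoin ℂ ({a} : Set A))) 2, ← map_mul]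
        norm_num
    have h' : IsNilpotent ((⟨a, haS⟩ : Algebra.adjoin ℂ ({a} : Set A)) - ⟨a, haS⟩ ^ 3) := by
      obtain ⟨k, hk⟩ := h
      exact ⟨k, Subtype.ext (by push_cast; exact hk)⟩
    obtain ⟨e', n', he', hn', hc', ha'⟩ :=
      @tripotent_decomp _ (Algebra.adjoinCommRingOfComm ℂ hcomm) inv2 ⟨a, haS⟩ h'
    refine ⟨(e' : A), (n' : A), ?_, ?_, ?_, ?_⟩
    · have h2 := congrArg (Subtype.val) he'
      push_cast at h2
      exact h2
    · obtain ⟨k, hk⟩ := hn'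
      refine ⟨k, ?_⟩
      have h2 := congrArg (Subtype.val) hk
      push_cast at h2
      exact h2
    · have h2 := congrArg (Subtype.val) hc'
      push_cast at h2
      exact h2
    · have h2 := congrArg (Subtype.val) ha'
      push_cast at h2
      exact h2
  have h31 : (∃ e n : A, e ^ 3 = e ∧ IsNilpotent n ∧ e * n = n * e ∧ a = e + n) →
      IsHirano a := by
    rintro ⟨e, n, he, hn, hcen, ha⟩
    have hcomm : ∀ y ∈ ({e, n} : Set A), ∀ z ∈ ({e, n} : Set A), y * z = z * y := by
      intro y hy z hz
      simp only [Set.mem_insert_iff, Set.mem_singleton_iff] at hy hz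
      rcases hy with rfl | rfl <;> rcases hz with rfl | rfl
      · rfl
      · exact hcen
      · exact hcen.symm
      · rfl
    have heS : e ∈ Algebra.adjoin ℂ ({e, n} : Set A) := Algebra.subset_adjoin (by simp)
    have hnS : n ∈ Algebra.adjoin ℂ ({e, n} : Set A) := Algebra.subset_adjoin (by simp)
    have haS : a ∈ Algebra.adjoin ℂ ({e, n} : Set A) := by
      rw [ha]; exact add_mem heS hnS
    have he' : (⟨e, heS⟩ : Algebra.adjoin ℂ ({e, n} : Set A)) ^ 3 = ⟨e, heS⟩ :=
      Subtype.ext (by push_cast; exact he)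
    have hn' : IsNilpotent (⟨n, hnS⟩ : Algebra.adjoin ℂ ({e, n} : Set A)) := by
      obtain ⟨k, hk⟩ := hn
      exact ⟨k, Subtype.ext (by push_cast; exact hk)⟩
    have ha' : (⟨a, haS⟩ : Algebra.adjoin ℂ ({e, n} : Set A)) = ⟨e, heS⟩ + ⟨n, hnS⟩ :=
      Subtype.ext ha
    obtain ⟨x', hc', hx', hnil'⟩ :=
      @hirano_of_comm _ (Algebra.adjoinCommRingOfComm ℂ hcomm) ⟨e, heS⟩ ⟨n, hnS⟩ ⟨a, haS⟩
        he' hn' ha'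
    refine ⟨(x' : A), ?_, ?_, ?_⟩
    · have h2 := congrArg (Subtype.val) hc'
      push_cast at h2
      exact h2
    · have h2 := congrArg (Subtype.val) hx'
      push_cast at h2
      exact h2
    · obtain ⟨k, hk⟩ := hnil'
      refine ⟨k, ?_⟩
      have h2 := congrArg (Subtype.val) hk
      push_cast at h2
      exact h2
  exact ⟨⟨h12, fun h => h31 (h23 h)⟩, ⟨fun h => h23 (h12 h), h31⟩⟩
end

section
/- Let A be a complex Banach algebra with identity and let a, b, c ∈ A. If a and b are Hirano invertible, then the upper triangular 2×2 matrix with rows (a, c) and (0, b) is Hirano invertible in the 2×2 matrix algebra M₂(A). -/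
theorem hirano_of_idem {R : Type*} [Ring R] {a p : R} (hp : p * p = p)
    (hc : a * p = p * a) (hn : IsNilpotent (a ^ 2 - p)) : IsHirano a := by
  set n := a ^ 2 - p with hndef
  have han : a * n = n * a := by
    simp only [hndef, mul_sub, sub_mul, pow_two]
    rw [mul_assoc, hc]
  have hpn : p * n = n * p := by
    have hpa2 : p * (a * a) = a * a * p := by
      rw [← mul_assoc, ← hc, mul_assoc, ← hc, mul_assoc]
    simp only [hndef, mul_sub, sub_mul, pow_two, hpa2, hp]
  obtain ⟨u, hu⟩ := hn.isUnit_one_add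
  have hau : Commute a (u : R) := by rw [hu]; exact (Commute.one_right a).add_right han
  have hau' : Commute a ((u⁻¹ : Rˣ) : R) := hau.units_inv_right
  have key : a * (a * p * ((u⁻¹ : Rˣ) : R)) = p := by
    have haap : a * (a * p) = p * (u : R) := by
      have ha2 : a * a = n + p := by rw [hndef, sub_add_cancel, ← pow_two]
      rw [← mul_assoc, ha2, hu, add_mul, mul_add, mul_one, ← hpn, add_comm, hp]
    rw [← mul_assoc, haap, mul_assoc, u.mul_inv, mul_one]
  have hxa : a * p * ((u⁻¹ : Rˣ) : R) * a = p := by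
    calc a * p * ((u⁻¹ : Rˣ) : R) * a = a * p * (((u⁻¹ : Rˣ) : R) * a) := by
          rw [mul_assoc]
      _ = a * p * (a * ((u⁻¹ : Rˣ) : R)) := by rw [hau'.eq]
      _ = a * (p * a) * ((u⁻¹ : Rˣ) : R) := by
          rw [← mul_assoc, mul_assoc a p a]
      _ = a * (a * p * ((u⁻¹ : Rˣ) : R)) := by rw [← hc, mul_assoc, mul_assoc]
      _ = p := key
  refine ⟨a * p * ((u⁻¹ : Rˣ) : R), ?_, ?_, ?_⟩
  · rw [key, hxa]
  · rw [hxa, ← mul_assoc, ← mul_assoc, ← hc, mul_assoc a p p, hp]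
  · rw [key]; exact hn

theorem nilpotent_upper_tri {R : Type*} [Ring R] {u v : R} (w : R)
    (hu : IsNilpotent u) (hv : IsNilpotent v) :
    IsNilpotent (!![u, w; 0, v] : Matrix (Fin 2) (Fin 2) R) := by
  have htri : ∀ n : ℕ, ∃ s : R,
      (!![u, w; 0, v] : Matrix (Fin 2) (Fin 2) R) ^ n = !![u ^ n, s; 0, v ^ n] := by
    intro n
    induction n with
    | zero => exact ⟨0, by simp [Matrix.one_fin_two]⟩
    | succ k ih =>
      obtain ⟨s, hs⟩ := ih
      refine ⟨u ^ k * w + s * v, ?_⟩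
      rw [pow_succ, hs, Matrix.mul_fin_two]
      simp [pow_succ]
  obtain ⟨m, hm⟩ := hu
  obtain ⟨k, hk⟩ := hv
  obtain ⟨s, hs⟩ := htri m
  obtain ⟨t, ht⟩ := htri k
  refine ⟨m + k, ?_⟩
  rw [pow_add, hs, ht, hm, hk, Matrix.mul_fin_two]
  ext i j
  fin_cases i <;> fin_cases j <;> simp

theorem pow_sub_mul_idem {R : Type*} [Ring R] {a p : R} (hp : p * p = p)
    (hap : a * p = p * a) : ∀ n : ℕ, (a - a * p) ^ (n + 1) = a ^ (n + 1) - a ^ (n + 1) * p := by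
  have hpa : ∀ n : ℕ, a ^ n * p * a = a ^ (n + 1) * p := by
    intro n; rw [mul_assoc, ← hap, ← mul_assoc, ← pow_succ]
  intro n
  induction n with
  | zero => rw [pow_one, pow_one]
  | succ k ih =>
    rw [pow_succ, ih, sub_mul, mul_sub, mul_sub, ← pow_succ,
      ← mul_assoc, ← pow_succ, hpa, ← mul_assoc (a ^ (k+1) * p) a p, hpa,
      mul_assoc, hp]
    abel

theorem nilpotent_sub_mul_idem {R : Type*} [Ring R] {a p : R} (hp : p * p = p)
    (hap : a * p = p * a) (hn : IsNilpotent (a ^ 2 - p)) : IsNilpotent (a - a * p) := by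
  have hcap : Commute a p := hap
  have hcomm : Commute (a ^ 2 - p) (1 - p) :=
    (Commute.one_right _).sub_right ((hcap.pow_left 2).sub_left (Commute.refl p))
  have hsq : (a - a * p) ^ 2 = (a ^ 2 - p) * (1 - p) := by
    have h := pow_sub_mul_idem hp hap 1
    norm_num at h
    rw [h, mul_sub, mul_one, sub_mul, hp]
    abel
  obtain ⟨m, hm⟩ := hcomm.isNilpotent_mul_right hn
  exact ⟨2 * m, by rw [pow_mul, hsq, hm]⟩

/-- If `a, b` are Hirano invertible in a complex Banach algebra, then the upper
triangular matrix `!![a, c; 0, b]` is Hirano invertible in `M₂(A)`. -/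
theorem hirano_upper_triangular {A : Type*} [NormedRing A] [NormedAlgebra ℂ A]
    [CompleteSpace A] (a b c : A) (ha : IsHirano a) (hb : IsHirano b) :
    IsHirano (!![a, c; (0 : A), b] : Matrix (Fin 2) (Fin 2) A) := by
  obtain ⟨x, hx1, hx2, hx3⟩ := ha
  obtain ⟨y, hy1, hy2, hy3⟩ := hb
  obtain ⟨p, hpdef⟩ : ∃ p, p = a * x := ⟨a * x, rfl⟩
  obtain ⟨q, hqdef⟩ : ∃ q, q = b * y := ⟨b * y, rfl⟩
  -- basic commutation facts
  have hcax : Commute a x := hx1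
  have hcap : Commute a p := hpdef ▸ (Commute.refl a).mul_right hcax
  have hcby : Commute b y := hy1
  have hcbq : Commute b q := hqdef ▸ (Commute.refl b).mul_right hcby
  have hp : p * p = p := by
    rw [hpdef, mul_assoc, ← mul_assoc x a x, ← hx2]
  have hq : q * q = q := by
    rw [hqdef, mul_assoc, ← mul_assoc y b y, ← hy2]
  have hpx : p * x = x := by rw [hpdef, hx1, ← hx2]
  have hyq : y * q = y := by rw [hqdef, ← mul_assoc, ← hy2]
  have hnp : IsNilpotent (a ^ 2 - p) := by rw [hpdef]; exact hx3
  have hnq : IsNilpotent (b ^ 2 - q) := by rw [hqdef]; exact hy3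
  -- nilpotency exponents
  obtain ⟨m1, hm1⟩ := nilpotent_sub_mul_idem hp hcap.eq hnp
  obtain ⟨m2, hm2⟩ := nilpotent_sub_mul_idem hq hcbq.eq hnq
  set K := m1 + m2 + 1 with hKdef
  have hKa : a ^ K - a ^ K * p = 0 := by
    rw [← pow_sub_mul_idem hp hcap.eq (m1 + m2), show m1 + m2 + 1 = m1 + (m2 + 1) by ring,
      pow_add, hm1, zero_mul]
  have hKb : b ^ K - b ^ K * q = 0 := by
    rw [← pow_sub_mul_idem hq hcbq.eq (m1 + m2), show m1 + m2 + 1 = m2 + (m1 + 1) by ring,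
      pow_add, hm2, zero_mul]
  -- per-term power facts
  have haxn : ∀ n : ℕ, a * x ^ (n + 1) = p * x ^ n := by
    intro n; rw [pow_succ', ← mul_assoc, ← hpdef]
  have hpxn : ∀ n : ℕ, p * x ^ (n + 1) = x ^ (n + 1) := by
    intro n; rw [pow_succ', ← mul_assoc, hpx]
  have hyb : y * b = q := by rw [hqdef, ← hy1]
  have hybn : ∀ n : ℕ, y ^ (n + 1) * b = y ^ n * q := by
    intro n; rw [pow_succ, mul_assoc, hyb]
  have hyqn : ∀ n : ℕ, y ^ (n + 1) * q = y ^ (n + 1) := by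
    intro n; rw [pow_succ, mul_assoc, hyq]
  -- the corner element
  obtain ⟨w1, hw1def⟩ : ∃ w1, w1 = ∑ n ∈ Finset.range K, x ^ (n + 1) * c * (b ^ n - b ^ n * q) :=
    ⟨_, rfl⟩
  obtain ⟨w2, hw2def⟩ : ∃ w2, w2 = ∑ n ∈ Finset.range K, (a ^ n - a ^ n * p) * c * y ^ (n + 1) :=
    ⟨_, rfl⟩
  -- C1 ingredients
  have hpw1 : p * w1 = w1 := by
    rw [hw1def, Finset.mul_sum]
    refine Finset.sum_congr rfl fun n _ => ?_
    rw [← mul_assoc, ← mul_assoc, hpxn]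
  have hw1q : w1 * q = 0 := by
    rw [hw1def, Finset.sum_mul]
    refine Finset.sum_eq_zero fun n _ => ?_
    rw [mul_assoc, sub_mul, mul_assoc (b ^ n) q q, hq, sub_self, mul_zero]
  have hpw2 : p * w2 = 0 := by
    rw [hw2def, Finset.mul_sum]
    refine Finset.sum_eq_zero fun n _ => ?_
    have hpan : p * a ^ n = a ^ n * p := ((hcap.symm).pow_right n).eq
    rw [← mul_assoc, ← mul_assoc, mul_sub, hpan, ← mul_assoc, hpan, mul_assoc (a ^ n) p p, hp,
      sub_self, zero_mul, zero_mul]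
  have hw2q : w2 * q = w2 := by
    rw [hw2def, Finset.sum_mul]
    refine Finset.sum_congr rfl fun n _ => ?_
    rw [mul_assoc, hyqn]
  -- telescoping for w1
  have hE1 : a * w1 - w1 * b = p * c - p * c * q := by
    have e1 : a * w1 = ∑ n ∈ Finset.range K, p * x ^ n * c * (b ^ n - b ^ n * q) := by
      rw [hw1def, Finset.mul_sum]
      refine Finset.sum_congr rfl fun n _ => ?_
      rw [← mul_assoc, ← mul_assoc, haxn]
    have e2 : w1 * b = ∑ n ∈ Finset.range K,
        p * x ^ (n + 1) * c * (b ^ (n + 1) - b ^ (n + 1) * q) := by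
      rw [hw1def, Finset.sum_mul]
      refine Finset.sum_congr rfl fun n _ => ?_
      rw [hpxn, mul_assoc, sub_mul, mul_assoc (b ^ n) q b, ← hcbq.eq, ← mul_assoc, ← pow_succ]
    rw [e1, e2, ← Finset.sum_sub_distrib,
      Finset.sum_range_sub' (fun n => p * x ^ n * c * (b ^ n - b ^ n * q)) K]
    have hgK : p * x ^ K * c * (b ^ K - b ^ K * q) = 0 := by rw [hKb, mul_zero]
    rw [hgK, sub_zero, pow_zero, pow_zero, mul_one, one_mul, mul_sub, mul_one]
  -- telescoping for w2
  have hE2 : w2 * b - a * w2 = c * q - p * c * q := by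
    have e1 : w2 * b = ∑ n ∈ Finset.range K, (a ^ n - a ^ n * p) * c * (y ^ n * q) := by
      rw [hw2def, Finset.sum_mul]
      refine Finset.sum_congr rfl fun n _ => ?_
      rw [mul_assoc, hybn]
    have e2 : a * w2 = ∑ n ∈ Finset.range K,
        (a ^ (n + 1) - a ^ (n + 1) * p) * c * (y ^ (n + 1) * q) := by
      rw [hw2def, Finset.mul_sum]
      refine Finset.sum_congr rfl fun n _ => ?_
      rw [hyqn, ← mul_assoc, ← mul_assoc, mul_sub, ← pow_succ', ← mul_assoc, ← pow_succ']
    rw [e1, e2, ← Finset.sum_sub_distrib,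
      Finset.sum_range_sub' (fun n => (a ^ n - a ^ n * p) * c * (y ^ n * q)) K]
    have hhK : (a ^ K - a ^ K * p) * c * (y ^ K * q) = 0 := by rw [hKa, zero_mul, zero_mul]
    rw [hhK, sub_zero, pow_zero, pow_zero, one_mul, one_mul, sub_mul, one_mul, sub_mul]
  -- the two structural identities
  have hC1 : p * (w1 + w2) + (w1 + w2) * q = w1 + w2 := by
    rw [mul_add, add_mul, hpw1, hpw2, hw1q, hw2q]
    abel
  have hC2 : a * (w1 + w2) + c * q = p * c + (w1 + w2) * b := by
    have e1 : a * w1 = p * c - p * c * q + w1 * b := by rw [← hE1]; abel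
    have e2 : a * w2 = w2 * b - (c * q - p * c * q) := by rw [← hE2]; abel
    rw [mul_add, add_mul, e1, e2]
    abel
  -- assemble the matrices
  set M : Matrix (Fin 2) (Fin 2) A := !![a, c; 0, b] with hMdef
  set P : Matrix (Fin 2) (Fin 2) A := !![p, w1 + w2; 0, q] with hPdef
  have hPP : P * P = P := by
    rw [hPdef, Matrix.mul_fin_two, hp, hq, hC1]
    simp only [mul_zero, zero_mul, add_zero, zero_add]
  have hMP : M * P = P * M := by
    rw [hMdef, hPdef, Matrix.mul_fin_two, Matrix.mul_fin_two]
    simp only [mul_zero, zero_mul, add_zero, zero_add]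
    rw [hcap.eq, hC2, hcbq.eq]
  have hMnil : IsNilpotent (M ^ 2 - P) := by
    have hsub : M ^ 2 - P = !![a * a - p, a * c + c * b - (w1 + w2); 0, b * b - q] := by
      rw [pow_two, hMdef, hPdef, Matrix.mul_fin_two]
      ext i j
      fin_cases i <;> fin_cases j <;> simp
    rw [hsub]
    have hnp' : IsNilpotent (a * a - p) := by rw [← pow_two]; exact hnp
    have hnq' : IsNilpotent (b * b - q) := by rw [← pow_two]; exact hnq
    exact nilpotent_upper_tri _ hnp' hnq'
  exact hirano_of_idem hPP hMP hMnil
end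

section
/- Let A be a complex Banach algebra with identity, let A be an m×n matrix and B an n×m matrix with entries in A. If the product AB is Hirano invertible in the m×m matrix algebra Mₘ(A), then BA is Hirano invertible in the n×n matrix algebra Mₙ(A). -/
/-- If `A * B` is Hirano invertible in `Mₘ(𝒜)`, then `B * A` is Hirano invertible
in `Mₙ(𝒜)`, for an `m × n` matrix `A` and an `n × m` matrix `B` over a complex
Banach algebra `𝒜`. -/
theorem hirano_mul_comm {𝒜 : Type*} [NormedRing 𝒜] [NormedAlgebra ℂ 𝒜] [CompleteSpace 𝒜]
    {m n : ℕ} (A : Matrix (Fin m) (Fin n) 𝒜) (B : Matrix (Fin n) (Fin m) 𝒜)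
    (h : IsHirano (A * B)) : IsHirano (B * A) := by
  obtain ⟨x, hc, hx, k, hk⟩ := h
  have h1 : A * B * (x * x) = x := by
    rw [← Matrix.mul_assoc, hc, ← hx]
  have h2 : x * x * (A * B) = x := by
    rw [Matrix.mul_assoc, ← hc, ← Matrix.mul_assoc, ← hx]
  have e1 : B * A * (B * (x * x) * A) = B * x * A := by
    rw [show B * A * (B * (x * x) * A) = B * (A * B * (x * x)) * A from by
      simp only [Matrix.mul_assoc], h1]
  have e2 : B * (x * x) * A * (B * A) = B * x * A := by
    rw [show B * (x * x) * A * (B * A) = B * (x * x * (A * B)) * A from by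
      simp only [Matrix.mul_assoc], h2]
  have e3 : B * x * A * (B * (x * x) * A) = B * (x * x) * A := by
    rw [show B * x * A * (B * (x * x) * A) = B * (x * (A * B * (x * x))) * A from by
      simp only [Matrix.mul_assoc], h1]
  refine ⟨B * (x * x) * A, ?_, ?_, ?_⟩
  · rw [e1, e2]
  · rw [e2, e3]
  · have e4 : (B * A) ^ 2 = B * (A * B) * A := by
      rw [sq]; simp only [Matrix.mul_assoc]
    have e5 : (B * A) ^ 2 - B * A * (B * (x * x) * A) = B * (A * B - x) * A := by
      rw [e4, e1, Matrix.mul_sub, Matrix.sub_mul]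
    have hn : A * B * (A * B - x) = (A * B) ^ 2 - A * B * x := by
      rw [Matrix.mul_sub, sq]
    have key : ∀ j : ℕ, (B * (A * B - x) * A) ^ (j + 1)
        = B * ((A * B - x) * ((A * B) ^ 2 - A * B * x) ^ j) * A := by
      intro j
      induction j with
      | zero => rw [pow_one, pow_zero, mul_one]
      | succ j ih =>
        rw [pow_succ (B * (A * B - x) * A) (j + 1), ih, pow_succ _ j, ← hn]
        simp only [Matrix.mul_assoc]
    rw [e5]
    exact ⟨k + 1, by rw [key k, hk, mul_zero, Matrix.mul_zero, Matrix.zero_mul]⟩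
end

section
/- Let A be a complex Banach algebra with identity and let a, b ∈ A be Hirano invertible. If ab = 0, then a + b is Hirano invertible. -/
open Polynomial Finset

private lemma pow_add_eq_sum_of_mul_eq_zero {R : Type*} [Ring R] {x y : R} (h : x * y = 0)
    (N : ℕ) : (x + y) ^ N = ∑ i ∈ Finset.range (N + 1), y ^ i * x ^ (N - i) := by
  induction N with
  | zero => simp
  | succ N ih =>
    rw [pow_succ', ih, add_mul]
    rw [Finset.mul_sum, Finset.mul_sum]
    have h1 : ∑ i ∈ Finset.range (N + 1), x * (y ^ i * x ^ (N - i)) = x ^ (N + 1) := by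
      rw [Finset.sum_range_succ']
      have : ∀ i ∈ Finset.range N, x * (y ^ (i + 1) * x ^ (N - (i + 1))) = 0 := by
        intro i _
        rw [pow_succ', ← mul_assoc, ← mul_assoc, h, zero_mul, zero_mul]
      rw [Finset.sum_congr rfl this, Finset.sum_const_zero, zero_add]
      rw [pow_zero, one_mul, Nat.sub_zero, ← pow_succ']
    have h2 : ∑ i ∈ Finset.range (N + 1), y * (y ^ i * x ^ (N - i))
        = ∑ i ∈ Finset.range (N + 1), y ^ (i + 1) * x ^ (N + 1 - (i + 1)) := by
      refine Finset.sum_congr rfl fun i hi => ?_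
      rw [← mul_assoc, ← pow_succ', Nat.succ_sub_succ]
    rw [h1, h2, Finset.sum_range_succ' (fun i => y ^ i * x ^ (N + 1 - i)) (N + 1)]
    rw [pow_zero, one_mul, Nat.sub_zero, add_comm]

private lemma isNilpotent_add_of_mul_eq_zero {R : Type*} [Ring R] {x y : R} (h : x * y = 0)
    (hx : IsNilpotent x) (hy : IsNilpotent y) : IsNilpotent (x + y) := by
  obtain ⟨n, hn⟩ := hx
  obtain ⟨m, hm⟩ := hy
  refine ⟨m + n, ?_⟩
  rw [pow_add_eq_sum_of_mul_eq_zero h]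
  refine Finset.sum_eq_zero fun i hi => ?_
  by_cases him : m ≤ i
  · have : y ^ i = 0 := by
      rw [← Nat.sub_add_cancel him, pow_add, hm, mul_zero]
    rw [this, zero_mul]
  · have h1 : n ≤ m + n - i := by omega
    have : x ^ (m + n - i) = 0 := by
      rw [← Nat.sub_add_cancel h1, pow_add, hn, mul_zero]
    rw [this, mul_zero]

private lemma nilpotent_of_data {R : Type*} [Ring R] {a e n : R} (hae : Commute a e)
    (he2 : e * e = e) (ha2 : a ^ 2 = n + e) (hn_nil : IsNilpotent n) :
    IsNilpotent (a - a ^ 3) := by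
  have hne : n = a ^ 2 - e := by rw [ha2]; abel
  have han : Commute a n := by
    rw [hne]; exact ((Commute.refl a).pow_right 2).sub_right hae
  have hen : Commute e n := by
    rw [hne]; exact (hae.symm.pow_right 2).sub_right (Commute.refl e)
  have ha3 : a ^ 3 = a * n + a * e := by rw [← mul_add, ← ha2, ← pow_succ']
  have key : a - a ^ 3 = a * (1 - e) - a * n := by
    rw [ha3, mul_sub, mul_one]; abel
  have hae1 : Commute a (1 - e) := (Commute.one_right a).sub_right hae
  have h_an : IsNilpotent (a * n) := han.isNilpotent_mul_left hn_nil
  have h_a1e : IsNilpotent (a * (1 - e)) := by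
    have h1e : (1 - e) * (1 - e) = 1 - e := (IsIdempotentElem.one_sub he2)
    have sq : (a * (1 - e)) ^ 2 = n * (1 - e) := by
      have : (a * (1 - e)) ^ 2 = a ^ 2 * ((1 - e) * (1 - e)) := by
        rw [pow_two, pow_two, mul_assoc, ← mul_assoc (1 - e) a (1 - e), ← hae1.eq,
          mul_assoc, ← mul_assoc]
      rw [this, h1e, ha2, add_mul, mul_sub e, mul_one, he2, sub_self, add_zero]
    have hn1e : IsNilpotent (n * (1 - e)) :=
      ((Commute.one_right n).sub_right hen.symm).isNilpotent_mul_right hn_nil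
    obtain ⟨k, hk⟩ := hn1e
    exact ⟨2 * k, by rw [pow_mul, sq, hk]⟩
  have hcomm : Commute (a * (1 - e)) (a * n) := by
    have c1 : Commute a (a * n) := (Commute.refl a).mul_right han
    have c2 : Commute (1 - e) (a * n) :=
      hae1.symm.mul_right ((Commute.one_right n).sub_right hen.symm).symm
    exact c1.mul_left c2
  rw [key]
  exact hcomm.isNilpotent_sub h_a1e h_an


private lemma nilpotent_of_hirano' {R : Type*} [Ring R] {a x : R}
    (h1 : a * x = x * a) (h2 : x = x * a * x) (h3 : IsNilpotent (a ^ 2 - a * x)) :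
    IsNilpotent (a - a ^ 3) := by
  refine nilpotent_of_data ((Commute.refl a).mul_right h1) ?_ (by abel) h3
  show a * x * (a * x) = a * x
  rw [mul_assoc, ← mul_assoc x a x, ← h2]

private noncomputable def hipoly : ℕ → Polynomial ℤ
  | 0 => Polynomial.X ^ 2
  | (m + 1) => 3 * hipoly m ^ 2 - 2 * hipoly m ^ 3

private lemma hipoly_dvd1 (m : ℕ) :
    ((X : Polynomial ℤ) ^ 2 - X ^ 4) ^ (2 ^ m) ∣ hipoly m - hipoly m ^ 2 := by
  induction m with
  | zero =>
    rw [hipoly, pow_zero, pow_one]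
    exact dvd_of_eq (by ring)
  | succ m ih =>
    have key : hipoly (m + 1) - hipoly (m + 1) ^ 2
        = (hipoly m - hipoly m ^ 2) ^ 2 * (-4 * hipoly m ^ 2 + 4 * hipoly m + 3) := by
      show (3 * hipoly m ^ 2 - 2 * hipoly m ^ 3)
          - (3 * hipoly m ^ 2 - 2 * hipoly m ^ 3) ^ 2 = _
      ring
    rw [key, pow_succ 2 m, pow_mul]
    exact (pow_dvd_pow_of_dvd ih 2).mul_right _

private lemma hipoly_dvd2 (m : ℕ) :
    ((X : Polynomial ℤ) ^ 2 - X ^ 4) ∣ (X ^ 2 - hipoly m) := by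
  induction m with
  | zero => rw [hipoly, sub_self]; exact dvd_zero _
  | succ m ih =>
    have key : (X : Polynomial ℤ) ^ 2 - hipoly (m + 1)
        = (X ^ 2 - hipoly m) + (hipoly m - hipoly m ^ 2) * (1 - 2 * hipoly m) := by
      show _ = _ + _ * _
      rw [show hipoly (m + 1) = 3 * hipoly m ^ 2 - 2 * hipoly m ^ 3 from rfl]
      ring
    rw [key]
    exact dvd_add ih
      (((dvd_pow_self _ (Nat.two_pow_pos m).ne').trans (hipoly_dvd1 m)).mul_right _)

private lemma hirano_of_nilpotent {R : Type*} [Ring R] {a : R}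
    (h : IsNilpotent (a - a ^ 3)) :
    ∃ x : R, a * x = x * a ∧ x = x * a * x ∧ IsNilpotent (a ^ 2 - a * x) := by
  have ht : IsNilpotent (a ^ 2 - a ^ 4) := by
    have heq : a ^ 2 - a ^ 4 = a * (a - a ^ 3) := by noncomm_ring
    rw [heq]
    exact ((Commute.refl a).sub_right ((Commute.refl a).pow_right 3)).isNilpotent_mul_left h
  obtain ⟨k, hk⟩ := ht
  have hkM : k ≤ 2 ^ k := (Nat.lt_two_pow_self (n := k)).le
  -- the idempotent
  set e : R := Polynomial.aeval a (hipoly k) with he_def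
  have haeval : ∀ p q : Polynomial ℤ,
      Commute (Polynomial.aeval a p) (Polynomial.aeval a q) :=
    fun p q => (Commute.all p q).map (Polynomial.aeval a)
  have haevalX : (Polynomial.aeval a) (X : Polynomial ℤ) = a := Polynomial.aeval_X a
  have haevalT : (Polynomial.aeval a) ((X : Polynomial ℤ) ^ 2 - X ^ 4) = a ^ 2 - a ^ 4 := by
    rw [map_sub, map_pow, map_pow, haevalX]
  have hT0 : (a ^ 2 - a ^ 4) ^ (2 ^ k) = 0 := by
    rw [← Nat.sub_add_cancel hkM, pow_add, hk, mul_zero]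
  have he2 : e * e = e := by
    obtain ⟨c, hc⟩ := hipoly_dvd1 k
    have h0 : e - e ^ 2 = 0 := by
      have := congrArg (Polynomial.aeval a) hc
      rw [map_sub, map_mul, map_pow, map_pow, haevalT, ← he_def] at this
      rw [this, hT0, zero_mul]
    have h1 : e = e ^ 2 := sub_eq_zero.mp h0
    rw [← pow_two]
    exact h1.symm
  have hae : Commute a e := by
    have := haeval X (hipoly k)
    rwa [haevalX, ← he_def] at this
  set n : R := a ^ 2 - e with hn_def
  have hn_nil : IsNilpotent n := by
    obtain ⟨c, hc⟩ := hipoly_dvd2 k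
    have h0 : n = (a ^ 2 - a ^ 4) * (Polynomial.aeval a c) := by
      have := congrArg (Polynomial.aeval a) hc
      rw [map_sub, map_mul, map_pow, haevalT, haevalX, ← he_def] at this
      rw [hn_def, this]
    rw [h0]
    have hcomm : Commute (a ^ 2 - a ^ 4) (Polynomial.aeval a c) := by
      have := haeval (X ^ 2 - X ^ 4) c
      rwa [haevalT] at this
    exact hcomm.isNilpotent_mul_right ⟨k, hk⟩
  obtain ⟨K, hK⟩ := hn_nil
  have hernel : Commute a n := by
    rw [hn_def]; exact ((Commute.refl a).pow_right 2).sub_right hae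
  have hen : Commute e n := by
    rw [hn_def]; exact (hae.symm.pow_right 2).sub_right (Commute.refl e)
  set S : R := ∑ i ∈ Finset.range K, (-n) ^ i with hS_def
  have hSa : Commute a S := Commute.sum_right _ _ _ fun i _ => (hernel.neg_right.pow_right i)
  have hSe : Commute e S := Commute.sum_right _ _ _ fun i _ => (hen.neg_right.pow_right i)
  set w : R := S * e with hw_def
  have haw : Commute a w := hSa.mul_right hae
  have hnegK : (-n) ^ K = 0 := by rw [neg_pow, hK, mul_zero]
  have geo : S * (1 + n) = 1 := by
    have hg := geom_sum_mul (-n) K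
    rw [hnegK, zero_sub] at hg
    have h2 : (1 : R) + n = -(-n - 1) := by abel
    rw [← hS_def] at hg
    rw [h2, mul_neg, hg, neg_neg]
  have ha2 : a ^ 2 = n + e := by rw [hn_def]; abel
  have hSn : Commute n S := Commute.sum_right _ _ _ fun i _ =>
    ((Commute.refl n).neg_right.pow_right i)
  have key1 : a ^ 2 * w = e := by
    rw [ha2, hw_def]
    have hne : (n + e) * e = (1 + n) * e := by
      rw [add_mul, add_mul, one_mul, he2, add_comm]
    calc (n + e) * (S * e) = ((n + e) * S) * e := by rw [mul_assoc]
      _ = (S * (n + e)) * e := by rw [(hSn.add_left hSe).eq]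
      _ = S * ((n + e) * e) := by rw [mul_assoc]
      _ = S * ((1 + n) * e) := by rw [hne]
      _ = (S * (1 + n)) * e := by rw [mul_assoc]
      _ = e := by rw [geo, one_mul]
  have hax_e : a * (a * w) = e := by rw [← mul_assoc, ← pow_two, key1]
  have hew : e * w = w := by
    rw [hw_def, ← mul_assoc, hSe.eq, mul_assoc, he2]
  refine ⟨a * w, ((Commute.refl a).mul_right haw).eq, ?_, ?_⟩
  · symm
    calc ((a * w) * a) * (a * w) = (a * (a * w)) * (a * w) := by
          rw [((Commute.refl a).mul_right haw).symm.eq]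
      _ = e * (a * w) := by rw [hax_e]
      _ = (e * a) * w := by rw [mul_assoc]
      _ = (a * e) * w := by rw [hae.eq]
      _ = a * (e * w) := by rw [mul_assoc]
      _ = a * w := by rw [hew]
  · rw [hax_e]
    exact ⟨K, hK⟩

/-- If `a, b` are Hirano invertible and `a * b = 0`, then `a + b` is Hirano invertible. -/
theorem hirano_add_of_mul_eq_zero {A : Type*} [NormedRing A] [NormedAlgebra ℂ A]
    [CompleteSpace A] (a b : A) (ha : IsHirano a) (hb : IsHirano b) (hab : a * b = 0) :
    IsHirano (a + b) := by
  obtain ⟨x, hx1, hx2, hx3⟩ := ha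
  obtain ⟨y, hy1, hy2, hy3⟩ := hb
  have hu : IsNilpotent (a - a ^ 3) := nilpotent_of_hirano' hx1 hx2 hx3
  have hv : IsNilpotent (b - b ^ 3) := nilpotent_of_hirano' hy1 hy2 hy3
  set c : A := -((b * (a + b)) * a) with hc_def
  have key0 : ∀ z w : A, (z * a) * (b * w) = 0 := fun z w => by
    rw [mul_assoc, ← mul_assoc a b w, hab, zero_mul, mul_zero]
  have hufact : a - a ^ 3 = (1 - a ^ 2) * a := by noncomm_ring
  have hvfact : b - b ^ 3 = b * (1 - b ^ 2) := by noncomm_ring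
  have huv : (a - a ^ 3) * (b - b ^ 3) = 0 := by
    rw [hufact, hvfact]; exact key0 _ _
  have huc : (a - a ^ 3) * c = 0 := by
    rw [hufact, hc_def, mul_neg, mul_assoc b (a + b) a, key0, neg_zero]
  have hcv : c * (b - b ^ 3) = 0 := by
    rw [hvfact, hc_def, neg_mul, key0, neg_zero]
  have hcc : c * c = 0 := by
    rw [hc_def, neg_mul_neg]
    have := key0 (b * (a + b)) ((a + b) * a)
    rwa [← mul_assoc b (a + b) a] at this
  have hc_nil : IsNilpotent c := ⟨2, by rw [pow_two, hcc]⟩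
  have hcv_nil : IsNilpotent (c + (b - b ^ 3)) :=
    isNilpotent_add_of_mul_eq_zero hcv hc_nil hv
  have huvc : (a - a ^ 3) * (c + (b - b ^ 3)) = 0 := by
    rw [mul_add, huc, huv, add_zero]
  have hfinal : IsNilpotent ((a - a ^ 3) + (c + (b - b ^ 3))) :=
    isNilpotent_add_of_mul_eq_zero huvc hu hcv_nil
  have expand : (a + b) ^ 3 = a ^ 3 + b ^ 3 + (b * (a + b)) * a
      + (a * (a * b) + ((a * b) * a + ((a * b) * b + b * (a * b)))) := by
    noncomm_ring
  have cube : (a + b) ^ 3 = a ^ 3 + b ^ 3 + (b * (a + b)) * a := by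
    rw [expand, hab]
    simp
  have hsum : (a + b) - (a + b) ^ 3 = (a - a ^ 3) + (c + (b - b ^ 3)) := by
    rw [cube, hc_def]; abel
  have : IsNilpotent ((a + b) - (a + b) ^ 3) := by rw [hsum]; exact hfinal
  exact hirano_of_nilpotent this
end

section
/- Let A be a complex Banach algebra with identity and let a, b ∈ A be Hirano invertible. If aba = 0 and ab² = 0, then a + b is Hirano invertible. -/
section Aux

variable {R : Type*} [Ring R]

/-- If `X * Y = 0` and both are nilpotent, then `X + Y` is nilpotent. -/
lemma nilC {X Y : R} (hXY : X * Y = 0) (hX : IsNilpotent X) (hY : IsNilpotent Y) :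
    IsNilpotent (X + Y) := by
  have key : ∀ k : ℕ, (X + Y) ^ (k + 1) =
      ∑ i ∈ Finset.range (k + 2), Y ^ i * X ^ (k + 1 - i) := by
    intro k
    induction k with
    | zero => simp [Finset.sum_range_succ]
    | succ k ih =>
      have h0 : ∀ i : ℕ, X * Y ^ (i + 1) = 0 := fun i => by
        rw [pow_succ', ← mul_assoc, hXY, zero_mul]
      have step1 : (X + Y) ^ (k + 1 + 1) = (X + Y) * (X + Y) ^ (k + 1) := by
        rw [← pow_succ']
      rw [step1, ih, Finset.mul_sum]
      have expand : ∀ i ∈ Finset.range (k + 2),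
          (X + Y) * (Y ^ i * X ^ (k + 1 - i)) =
            X * (Y ^ i * X ^ (k + 1 - i)) + Y ^ (i + 1) * X ^ (k + 1 - i) := by
        intro i _
        rw [add_mul, pow_succ', mul_assoc]
      rw [Finset.sum_congr rfl expand, Finset.sum_add_distrib]
      have first : (∑ i ∈ Finset.range (k + 2), X * (Y ^ i * X ^ (k + 1 - i)))
          = X ^ (k + 2) := by
        rw [Finset.sum_range_succ' (fun i => X * (Y ^ i * X ^ (k + 1 - i))) (k + 1)]
        have : ∀ i ∈ Finset.range (k + 1),
            X * (Y ^ (i + 1) * X ^ (k + 1 - (i + 1))) = 0 := by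
          intro i _
          rw [← mul_assoc, h0, zero_mul]
        rw [Finset.sum_congr rfl this]
        simp [← pow_succ']
      rw [first]
      rw [Finset.sum_range_succ' (fun i => Y ^ i * X ^ (k + 1 + 1 - i)) (k + 2)]
      simp only [Nat.succ_sub_succ, pow_zero, one_mul, Nat.sub_zero]
      rw [add_comm]
  obtain ⟨n, hn⟩ := hX
  obtain ⟨m, hm⟩ := hY
  refine ⟨n + m + 1, ?_⟩
  rw [show n + m + 1 = (n + m) + 1 from rfl, key (n + m)]
  apply Finset.sum_eq_zero
  intro i hi
  rcases le_or_gt m i with h | h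
  · rw [pow_eq_zero_of_le h hm, zero_mul]
  · rw [pow_eq_zero_of_le (by omega) hn, mul_zero]

/-- If `x * y * x = 0`, `x * y * y = 0` and both are nilpotent, then `x + y` is nilpotent. -/
lemma nilB {x y : R} (hx : IsNilpotent x) (hy : IsNilpotent y)
    (h1 : x * y * x = 0) (h2 : x * y * y = 0) : IsNilpotent (x + y) := by
  have k1 : x * (y * x) = 0 := by rw [← mul_assoc]; exact h1
  have k2 : x * (y * y) = 0 := by rw [← mul_assoc]; exact h2
  have hq : (x * y) * (x * y) = 0 := by
    rw [← mul_assoc, h1, zero_mul]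
  have hqnil : IsNilpotent (x * y) := ⟨2, by rw [pow_two]; exact hq⟩
  have sqnil : ∀ z : R, IsNilpotent z → IsNilpotent (z * z) := by
    intro z ⟨m, hm⟩
    exact ⟨m, by rw [← pow_two, ← pow_mul, two_mul, pow_add, hm, zero_mul]⟩
  have hZ : IsNilpotent (x * y + y * y) := by
    refine nilC ?_ hqnil (sqnil y hy)
    rw [← mul_assoc, h2, zero_mul]
  have key : ∀ k : ℕ, (y * x + y * y) ^ (k + 1)
      = y * (x * y + y * y) ^ k * (x + y) := by
    intro k
    induction k with
    | zero => simp [mul_add]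
    | succ k ih =>
      have : (y * x + y * y) ^ (k + 1 + 1) = (y * x + y * y) * (y * x + y * y) ^ (k + 1) := by
        rw [← pow_succ']
      rw [this, ih, show (x * y + y * y) ^ (k + 1) = (x * y + y * y) * (x * y + y * y) ^ k from by
        rw [← pow_succ']]
      noncomm_ring
  obtain ⟨m, hZm⟩ := hZ
  have hY' : IsNilpotent (y * x + y * y) :=
    ⟨m + 1, by rw [key m, hZm, mul_zero, zero_mul]⟩
  have hp' : IsNilpotent (x * x + (y * x + y * y)) := by
    refine nilC ?_ (sqnil x hx) hY'
    rw [mul_add, mul_assoc, k1, mul_zero, mul_assoc, k2, mul_zero, add_zero]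
  have hsq : IsNilpotent ((x + y) ^ 2) := by
    have e : (x + y) ^ 2 = x * y + (x * x + (y * x + y * y)) := by noncomm_ring
    rw [e]
    refine nilC ?_ hqnil hp'
    simp only [mul_add, ← mul_assoc, h1, h2, zero_mul, add_zero, zero_add]
  obtain ⟨n2, hn2⟩ := hsq
  exact ⟨2 * n2, by rw [pow_mul]; exact hn2⟩

/-- Forward direction: a Hirano invertible element satisfies `a - a ^ 3` nilpotent. -/
lemma isNilpotent_of_isHirano {a : R} (h : IsHirano a) : IsNilpotent (a - a ^ 3) := by
  obtain ⟨x, hc, hx, hn⟩ := h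
  set e := a * x with he_def
  have he : e * e = e := by
    have : (a * x) * (a * x) = a * (x * a * x) := by noncomm_ring
    rw [he_def, this, ← hx]
  have hae : e * a = a * e := by
    rw [he_def, mul_assoc, ← hc, ← mul_assoc]
  have hcae : Commute a e := hae.symm
  set n := a ^ 2 - e with hn_def
  have hnnil : IsNilpotent n := hn
  have hcan : Commute a n := ((Commute.refl a).pow_right 2).sub_right hcae
  have hcen : Commute e n := ((hcae.symm).pow_right 2).sub_right (Commute.refl e)
  set f := 1 - e with hf_def
  have hf : f * f = f := by
    rw [hf_def, mul_sub, mul_one, sub_mul, one_mul, he, sub_self, sub_zero]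
  have haf : a * f = f * a := by
    rw [hf_def, mul_sub, sub_mul, mul_one, one_mul, hae]
  have hcaf : Commute a f := haf
  have hef : e * f = 0 := by
    rw [hf_def, mul_sub, mul_one, he, sub_self]
  have sq_af : (a * f) * (a * f) = a ^ 2 * f := by
    rw [mul_assoc, ← mul_assoc f a f, ← haf, mul_assoc a f f, hf, ← mul_assoc, ← pow_two]
  have h2f : a ^ 2 * f = n * f := by
    have : a ^ 2 = n + e := by rw [hn_def]; abel
    rw [this, add_mul, hef, add_zero]
  have hcfn : Commute f n := ((Commute.one_left n).sub_left hcen)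
  have hnf : IsNilpotent (n * f) := hcfn.symm.isNilpotent_mul_right hnnil
  have haf_nil : IsNilpotent (a * f) := by
    obtain ⟨k, hk⟩ := hnf
    refine ⟨2 * k, ?_⟩
    rw [pow_mul, pow_two, sq_af, h2f, hk]
  have han_nil : IsNilpotent (a * n) := hcan.isNilpotent_mul_left hnnil
  have hcomm : Commute (a * f) (a * n) := by
    have h₁ : Commute a (a * n) := (Commute.refl a).mul_right hcan
    have h₂ : Commute f (a * n) := (hcaf.symm).mul_right hcfn
    exact h₁.mul_left h₂
  have key : a - a ^ 3 = a * f - a * n := by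
    rw [hf_def, hn_def, he_def]
    noncomm_ring
  rw [key]
  exact hcomm.isNilpotent_sub haf_nil han_nil

/-- Backward direction in a commutative ring. -/
lemma isHirano_of_isNilpotent_comm {R : Type*} [CommRing R] (a : R)
    (h : IsNilpotent (a - a ^ 3)) : IsHirano a := by
  have hm : IsNilpotent (a ^ 2 - (a ^ 2) ^ 2) := by
    have e : a ^ 2 - (a ^ 2) ^ 2 = a * (a - a ^ 3) := by ring
    rw [e]
    exact (Commute.all a _).isNilpotent_mul_left h
  obtain ⟨n, hn⟩ := hm
  have hn' : (a ^ 2 - (a ^ 2) ^ 2) ^ (n + 1) = 0 := by rw [pow_succ, hn, zero_mul]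
  have hee : IsIdempotentElem (1 - (1 - (a ^ 2) ^ (n + 1)) ^ (n + 1)) :=
    isIdempotentElem_one_sub_one_sub_pow_pow (a ^ 2) (n + 1) hn'
  set e : R := 1 - (1 - (a ^ 2) ^ (n + 1)) ^ (n + 1) with he_def
  have hee' : e * e = e := hee
  -- `a ^ 2 - e` is nilpotent: check it in the quotient by the nilradical
  have hne : IsNilpotent (a ^ 2 - e) := by
    rw [← mem_nilradical]
    set q := Ideal.Quotient.mk (nilradical R) with hq_def
    have h0 : q (a ^ 2 - (a ^ 2) ^ 2) = 0 := by
      rw [hq_def, Ideal.Quotient.eq_zero_iff_mem, mem_nilradical]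
      exact ⟨n, hn⟩
    simp only [map_sub, map_pow, sub_eq_zero] at h0
    have hidem : IsIdempotentElem ((q a) ^ 2) := by
      rw [IsIdempotentElem, ← pow_two]
      exact h0.symm
    rw [← Ideal.Quotient.eq_zero_iff_mem, ← hq_def]
    simp only [he_def, map_sub, map_one, map_pow]
    rw [hidem.pow_succ_eq, (hidem.one_sub).pow_succ_eq]
    ring
  have hu : IsUnit (1 + (a ^ 2 - e)) := hne.isUnit_one_add
  obtain ⟨w, hw⟩ := hu
  set c : R := ((w⁻¹ : Rˣ) : R) with hc_def
  have hc : c * (1 + (a ^ 2 - e)) = 1 := by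
    rw [hc_def, ← hw]
    exact w.inv_mul
  have ht : a ^ 2 * (c * e) = e := by linear_combination e * hc + c * hee'
  refine ⟨a * (c * e), mul_comm _ _, ?_, ?_⟩
  · linear_combination (-(a * (c * e))) * ht - (a * c) * hee'
  · have : a ^ 2 - a * (a * (c * e)) = a ^ 2 - e := by linear_combination -ht
    rw [this]
    exact hne
  
/-- Backward direction in a general ring, via the commutative subring generated by `a`. -/
lemma isHirano_of_isNilpotent {a : R} (h : IsNilpotent (a - a ^ 3)) : IsHirano a := by
  letI : CommRing (Subring.closure ({a} : Set R)) :=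
    Subring.closureCommRingOfComm (by
      rintro x hx y hy
      rw [Set.mem_singleton_iff] at hx hy
      subst hx; subst hy; rfl)
  set a' : Subring.closure ({a} : Set R) := ⟨a, Subring.subset_closure rfl⟩ with ha'
  have h' : IsNilpotent (a' - a' ^ 3) := by
    obtain ⟨k, hk⟩ := h
    refine ⟨k, ?_⟩
    apply Subtype.ext
    push_cast
    exact hk
  obtain ⟨x, hcx, hxx, hnx⟩ := isHirano_of_isNilpotent_comm a' h'
  refine ⟨(x : R), ?_, ?_, ?_⟩
  · have := congrArg Subtype.val hcx
    simpa using this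
  · have := congrArg Subtype.val hxx
    simpa using this
  · obtain ⟨k, hk⟩ := hnx
    refine ⟨k, ?_⟩
    have := congrArg Subtype.val hk
    simpa using this

end Aux

/-- If `a, b` are Hirano invertible, `a * b * a = 0` and `a * b ^ 2 = 0`,
then `a + b` is Hirano invertible. -/
theorem hirano_add_of_aba_abb_eq_zero {A : Type*} [NormedRing A] [NormedAlgebra ℂ A]
    [CompleteSpace A] (a b : A) (ha : IsHirano a) (hb : IsHirano b)
    (h1 : a * b * a = 0) (h2 : a * b ^ 2 = 0) :
    IsHirano (a + b) := by
  have hu : IsNilpotent (a - a ^ 3) := isNilpotent_of_isHirano ha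
  have hv : IsNilpotent (b - b ^ 3) := isNilpotent_of_isHirano hb
  have h2' : a * b * b = 0 := by rw [mul_assoc, ← pow_two]; exact h2
  have l1 : ∀ t : A, a * (b * (a * t)) = 0 := by
    intro t; simp only [← mul_assoc]; rw [h1, zero_mul]
  have l2 : ∀ t : A, a * (b * (b * t)) = 0 := by
    intro t; simp only [← mul_assoc]; rw [h2', zero_mul]
  have l3 : a * (b * a) = 0 := by rw [← mul_assoc]; exact h1
  have l4 : a * (b * b) = 0 := by rw [← mul_assoc]; exact h2'
  have pa : (a : A) ^ 3 = a * (a * a) := by noncomm_ring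
  have pb : (b : A) ^ 3 = b * (b * b) := by noncomm_ring
  set xS : A := -(b * (a * a)) + -(b * (b * a)) with hxS_def
  have hSS : xS * xS = 0 := by
    rw [hxS_def]
    simp only [mul_add, add_mul, mul_neg, neg_mul, neg_neg, mul_assoc]
    simp only [l1, l2, l3, l4, mul_zero, zero_mul, neg_zero, add_zero, zero_add]
  have hSnil : IsNilpotent xS := ⟨2, by rw [pow_two]; exact hSS⟩
  have hR : IsNilpotent (xS + (b - b ^ 3)) := by
    refine nilB hSnil hv ?_ ?_
    · rw [hxS_def, pb]
      simp only [mul_add, add_mul, mul_sub, sub_mul, mul_neg, neg_mul, neg_neg, mul_assoc]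
      simp only [l1, l2, l3, l4, mul_zero, zero_mul, neg_zero, add_zero, zero_add,
        sub_zero, zero_sub, sub_self]
    · rw [hxS_def, pb]
      simp only [mul_add, add_mul, mul_sub, sub_mul, mul_neg, neg_mul, neg_neg, mul_assoc]
      simp only [l1, l2, l3, l4, mul_zero, zero_mul, neg_zero, add_zero, zero_add,
        sub_zero, zero_sub, sub_self]
  have hP : IsNilpotent ((a - a ^ 3) + (xS + (b - b ^ 3))) := by
    refine nilB hu hR ?_ ?_
    · rw [hxS_def, pa, pb]
      simp only [mul_add, add_mul, mul_sub, sub_mul, mul_neg, neg_mul, neg_neg, mul_assoc]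
      simp only [l1, l2, l3, l4, mul_zero, zero_mul, neg_zero, add_zero, zero_add,
        sub_zero, zero_sub, sub_self, neg_zero]
    · rw [hxS_def, pa, pb]
      simp only [mul_add, add_mul, mul_sub, sub_mul, mul_neg, neg_mul, neg_neg, mul_assoc]
      simp only [l1, l2, l3, l4, mul_zero, zero_mul, neg_zero, add_zero, zero_add,
        sub_zero, zero_sub, sub_self, neg_zero]
  set Q : A := -(a * (a * b)) + -(b * (a * b)) with hQ_def
  have hQQ : Q * Q = 0 := by
    rw [hQ_def]
    simp only [mul_add, add_mul, mul_neg, neg_mul, neg_neg, mul_assoc]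
    simp only [l1, l2, l3, l4, mul_zero, zero_mul, neg_zero, add_zero, zero_add]
  have hQP : Q * ((a - a ^ 3) + (xS + (b - b ^ 3))) = 0 := by
    rw [hQ_def, hxS_def, pa, pb]
    simp only [mul_add, add_mul, mul_sub, sub_mul, mul_neg, neg_mul, neg_neg, mul_assoc]
    simp only [l1, l2, l3, l4, mul_zero, zero_mul, neg_zero, add_zero, zero_add,
      sub_zero, zero_sub, sub_self, neg_zero]
  have hw : IsNilpotent (Q + ((a - a ^ 3) + (xS + (b - b ^ 3)))) :=
    nilC hQP ⟨2, by rw [pow_two]; exact hQQ⟩ hP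
  have key : (a + b) - (a + b) ^ 3
      = Q + ((a - a ^ 3) + (xS + (b - b ^ 3))) - a * b * a - a * b ^ 2 := by
    rw [hQ_def, hxS_def]
    noncomm_ring
  rw [h1, h2, sub_zero, sub_zero] at key
  apply isHirano_of_isNilpotent
  rw [key]
  exact hw
end

section
/- Let A be a complex Banach algebra with identity and let a, b, c, d ∈ A. Suppose a and d are Hirano invertible, bc is strongly Drazin invertible with strongly Drazin inverse (bc)^D, and (bc)^D a = 0, a(bc)^π = 0 (where (bc)^π = 1 − bc(bc)^D), and bd = 0. Then the 2×2 matrix with rows (a, b) and (c, d) is Hirano invertible in M₂(A). -/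
/-- `y` is the *strongly Drazin inverse* of `b`: `b * y = y * b`, `y = y * b * y`,
and `b - b * y` is nilpotent. -/
def IsSDrazinInv {R : Type*} [Ring R] (b y : R) : Prop :=
  b * y = y * b ∧ y = y * b * y ∧ IsNilpotent (b - b * y)



section Aux
variable {R : Type*} [Ring R]

theorem powz {x : R} {u v : ℕ} (h : x ^ u = 0) (huv : u ≤ v) : x ^ v = 0 := by
  rw [show v = u + (v - u) from by omega, pow_add, h, zero_mul]

open Finset in
theorem addpow {x y : R} (hxy : x * y = 0) (k : ℕ) :
    (x + y) ^ k = ∑ i ∈ range (k + 1), y ^ i * x ^ (k - i) := by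
  induction k with
  | zero => simp
  | succ k ih =>
    have hx : ∀ i j : ℕ, x * (y ^ (i+1) * x ^ j) = 0 := by
      intro i j
      rw [pow_succ' y i, ← mul_assoc, ← mul_assoc, hxy, zero_mul, zero_mul]
    rw [pow_succ' (x + y) k, ih, add_mul, Finset.mul_sum, Finset.mul_sum]
    rw [Finset.sum_range_succ' (fun i => x * (y ^ i * x ^ (k - i)))]
    simp only [hx, Finset.sum_const_zero, zero_add, pow_zero, one_mul, Nat.sub_zero]
    rw [Finset.sum_range_succ' (fun i => y ^ i * x ^ (k + 1 - i))]
    simp only [pow_zero, one_mul, Nat.sub_zero]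
    rw [← pow_succ']
    rw [add_comm (x ^ (k+1))]
    congr 1
    apply Finset.sum_congr rfl
    intro i hi
    rw [Finset.mem_range] at hi
    rw [show k + 1 - (i + 1) = k - i from by omega, pow_succ' y i, mul_assoc]

theorem nilpAdd {x y : R} (hxy : x * y = 0) {u v : ℕ} (hx : x ^ u = 0) (hy : y ^ v = 0) :
    (x + y) ^ (u + v) = 0 := by
  rw [addpow hxy]
  apply Finset.sum_eq_zero
  intro i _
  rcases le_or_gt v i with h | h
  · rw [powz hy h, zero_mul]
  · rw [powz hx (by omega : u ≤ u + v - i), mul_zero]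

theorem nilpAdd' {x y : R} (hxy : x * y = 0) (hx : IsNilpotent x) (hy : IsNilpotent y) :
    IsNilpotent (x + y) := by
  obtain ⟨u, hu⟩ := hx; obtain ⟨v, hv⟩ := hy
  exact ⟨u + v, nilpAdd hxy hu hv⟩

open Finset in
theorem sandpow {x y : R} (hy : ∀ j, y * x ^ j * y = 0) (k : ℕ) :
    (x + y) ^ (k + 1) = x ^ (k + 1) + ∑ i ∈ range (k + 1), x ^ i * y * x ^ (k - i) := by
  induction k with
  | zero => simp
  | succ k ih =>
    rw [pow_succ (x + y) (k+1), ih, add_mul, mul_add]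
    simp only [Finset.sum_mul, mul_add]
    have h1 : ∀ i ∈ range (k+1), x ^ i * y * x ^ (k - i) * y = 0 := by
      intro i _
      rw [mul_assoc (x ^ i) y (x ^ (k-i)), mul_assoc, hy, mul_zero]
    rw [Finset.sum_congr rfl h1]
    simp only [Finset.sum_const_zero, add_zero]
    rw [← pow_succ]
    have h2 : ∀ i ∈ range (k+1), x ^ i * y * x ^ (k - i) * x = x ^ i * y * x ^ (k + 1 - i) := by
      intro i hi
      rw [Finset.mem_range] at hi
      rw [mul_assoc, ← pow_succ, show k - i + 1 = k + 1 - i from by omega]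
    rw [Finset.sum_congr rfl h2]
    rw [Finset.sum_range_succ (fun i => x ^ i * y * x ^ (k + 1 - i)) (k+1)]
    simp only [Nat.sub_self, pow_zero, mul_one]
    abel

theorem nilpSand {x y : R} (hy : ∀ j, y * x ^ j * y = 0) {u : ℕ} (hx : x ^ u = 0) :
    (x + y) ^ (2 * u + 1) = 0 := by
  rw [show 2 * u + 1 = 2 * u + 1 from rfl, sandpow hy (2*u)]
  rw [powz hx (by omega : u ≤ 2*u + 1)]
  rw [Finset.sum_eq_zero, add_zero]
  intro i hi
  rw [Finset.mem_range] at hi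
  rcases le_or_gt u i with h | h
  · rw [powz hx h, zero_mul, zero_mul]
  · rw [powz hx (by omega : u ≤ 2*u - i), mul_zero]

theorem conjNilp {g gi n : R} (hgi : gi * g = 1) (hn : IsNilpotent n) :
    IsNilpotent (g * n * gi) := by
  obtain ⟨k, hk⟩ := hn
  have hgi' : ∀ z : R, gi * (g * z) = z := fun z => by rw [← mul_assoc, hgi, one_mul]
  have H : ∀ j, (g * n * gi) ^ (j + 1) = g * n ^ (j + 1) * gi := by
    intro j
    induction j with
    | zero => simp
    | succ j ih =>
      rw [pow_succ, ih]
      simp only [mul_assoc, hgi']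
      congr 1
      simp only [← mul_assoc, ← pow_succ]
  refine ⟨k + 1, ?_⟩
  rw [H k, pow_succ, hk, zero_mul, mul_zero, zero_mul]

theorem nilpSubSq {e t : R} (he : e * e = e) (hc : e * t = t * e) (ht : IsNilpotent t) :
    IsNilpotent ((e + t) - (e + t) ^ 2) := by
  have key : (e + t) - (e + t) ^ 2 = (1 - 2 * e - t) * t := by
    have h0 : (e + t) - (e + t) ^ 2 = (e - e * e) + (t - e * t - t * e - t * t) := by
      noncomm_ring
    rw [h0, he, sub_self, zero_add, ← hc]
    noncomm_ring
  rw [key]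
  obtain ⟨k, hk⟩ := ht
  have h1 : Commute e t := hc
  have hcomm : Commute (1 - 2 * e - t) t := by
    have h2e : Commute (2 * e) t := by rw [two_mul]; exact h1.add_left h1
    exact ((Commute.one_left t).sub_left h2e).sub_left (Commute.refl t)
  exact ⟨k, by rw [hcomm.mul_pow, hk, mul_zero]⟩

end Aux



section Hir
variable {R : Type*} [Ring R]

open Polynomial

theorem commute_aeval {a s : R} (h : Commute a s) (q : ℤ[X]) :
    Commute a (Polynomial.aeval s q) := by
  induction q using Polynomial.induction_on with
  | C n => simpa using (Int.cast_commute n a).symm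
  | add p q hp hq => simpa [map_add] using hp.add_right hq
  | monomial n cc hp =>
    simp only [map_mul, aeval_C, aeval_X_pow, map_pow, aeval_X] at hp ⊢
    rw [pow_succ, ← mul_assoc]
    exact hp.mul_right h

/-- The Newton-type iteration. -/
noncomputable def FF : ℤ[X] → ℤ[X] := fun q => 3 * q ^ 2 - 2 * q ^ 3

theorem c1 (k : ℕ) : (X - X ^ 2 : ℤ[X]) ∣ X - FF^[k] X := by
  induction k with
  | zero => simp
  | succ k ih =>
    rw [Function.iterate_succ_apply']
    set q : ℤ[X] := FF^[k] X with hq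
    have hq2 : (X - X ^ 2 : ℤ[X]) ∣ q - q ^ 2 := by
      have h1 : (q - q ^ 2 : ℤ[X]) = (X - X ^ 2) + (X - q) * (X + q - 1) := by ring
      rw [h1]
      exact dvd_add dvd_rfl (Dvd.dvd.mul_right ih _)
    have h2 : (X : ℤ[X]) - FF q = (X - q) + (q - q ^ 2) * (1 - 2 * q) := by
      show (X : ℤ[X]) - (3 * q ^ 2 - 2 * q ^ 3) = _
      ring
    rw [h2]
    exact dvd_add ih (Dvd.dvd.mul_right hq2 _)

theorem c2 (k : ℕ) : ((X - X ^ 2 : ℤ[X]) ^ 2 ^ k) ∣ (FF^[k] X - (FF^[k] X) ^ 2) := by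
  induction k with
  | zero => simpa using dvd_rfl
  | succ k ih =>
    rw [Function.iterate_succ_apply']
    set q : ℤ[X] := FF^[k] X with hq
    have key : FF q - (FF q) ^ 2 = (q - q ^ 2) ^ 2 * ((3 - 2 * q) * (1 + 2 * q)) := by
      show (3 * q ^ 2 - 2 * q ^ 3) - (3 * q ^ 2 - 2 * q ^ 3) ^ 2 = _
      ring
    rw [key]
    have h2 : ((X - X ^ 2 : ℤ[X]) ^ 2 ^ (k+1)) = ((X - X ^ 2 : ℤ[X]) ^ 2 ^ k) ^ 2 := by
      rw [← pow_mul, Nat.pow_succ]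
    rw [h2]
    exact Dvd.dvd.mul_right (pow_dvd_pow_of_dvd ih 2) _

theorem hirano_of_nilpotent_s7 (a : R) (h : IsNilpotent (a ^ 2 - a ^ 4)) : IsHirano a := by
  obtain ⟨n, hn⟩ := h
  set s : R := a ^ 2 with hs
  have hbn : (s - s ^ 2) ^ n = 0 := by
    rw [hs, ← pow_mul]; exact hn
  set φ : ℤ[X] →ₐ[ℤ] R := Polynomial.aeval s with hφ
  have Z0 : ∀ r : ℤ[X], ((X - X ^ 2 : ℤ[X]) ^ n) ∣ r → φ r = 0 := by
    intro r ⟨w, hw⟩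
    rw [hw, map_mul, map_pow, map_sub, map_pow, Polynomial.aeval_X]
    show (s - s ^ 2) ^ n * φ w = 0
    rw [hbn, zero_mul]
  set P : ℤ[X] := FF^[n] X with hP
  have hdvd1 : (X - X ^ 2 : ℤ[X]) ∣ X - P := c1 n
  have hPP : ((X - X ^ 2 : ℤ[X]) ^ n) ∣ P - P ^ 2 :=
    dvd_trans (pow_dvd_pow _ (Nat.lt_two_pow_self (n := n)).le) (c2 n)
  set e : R := φ P with he'
  set ue : R := φ ((∑ i ∈ Finset.range n, (-(X - P)) ^ i) * P) with hue'
  set U : ℤ[X] := ∑ i ∈ Finset.range n, (-(X - P)) ^ i with hU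
  -- geometric series identity
  have G : U * (1 + (X - P)) = 1 - (-(X - P)) ^ n := by
    have gg := geom_sum_mul (-(X - P)) n
    rw [hU]; linear_combination -gg
  -- e is idempotent
  have he : e * e = e := by
    have : e * e - e = φ (P * P - P) := by rw [map_sub, map_mul]
    have hz : φ (P * P - P) = 0 := by
      apply Z0
      obtain ⟨w, hw⟩ := hPP
      exact ⟨-w, by linear_combination -hw⟩
    rw [hz] at this
    exact sub_eq_zero.mp this
  -- nilpotent part
  have qn : (s - e) ^ n = 0 := by
    have h1 : s - e = φ (X - P) := by rw [map_sub, Polynomial.aeval_X]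
    rw [h1, ← map_pow]
    exact Z0 _ (pow_dvd_pow_of_dvd hdvd1 n)
  -- s * ue = e
  have bue : s * ue = e := by
    have K : X * (U * P) - P = -((-(X - P)) ^ n * P) + U * (P ^ 2 - P) := by
      linear_combination G * P
    have hdvdK : ((X - X ^ 2 : ℤ[X]) ^ n) ∣ X * (U * P) - P := by
      rw [K]
      apply dvd_add
      · exact (pow_dvd_pow_of_dvd ((dvd_neg).mpr hdvd1) n).mul_right _ |>.neg_right
      · obtain ⟨w, hw⟩ := hPP
        exact ⟨U * -w, by linear_combination U * -hw⟩
    have h1 : s * ue - e = φ (X * (U * P) - P) := by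
      rw [map_sub, map_mul, Polynomial.aeval_X, hue']
    rw [Z0 _ hdvdK] at h1
    exact sub_eq_zero.mp h1
  -- e * ue = ue
  have euee : e * ue = ue := by
    have h1 : e * ue - ue = φ (P * (U * P) - U * P) := by
      rw [map_sub, map_mul, he', hue']
    have hz : φ (P * (U * P) - U * P) = 0 := by
      apply Z0
      obtain ⟨w, hw⟩ := hPP
      exact ⟨-(U * w), by linear_combination -U * hw⟩
    rw [hz] at h1
    exact sub_eq_zero.mp h1
  -- commutation
  have cas : Commute a s := (Commute.refl a).pow_right 2
  have cau : Commute a ue := by rw [hue']; exact commute_aeval cas _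
  have cae : Commute a e := by rw [he']; exact commute_aeval cas _
  -- the Hirano inverse
  refine ⟨a * ue, ?_, ?_, ?_⟩
  · -- a * (a * ue) = (a * ue) * a
    rw [mul_assoc a ue a, ← cau.eq]
  · -- a * ue = (a * ue) * a * (a * ue)
    have hax : a * (a * ue) = e := by
      rw [← mul_assoc, ← pow_two, ← hs, bue]
    have hxa : a * ue * a = e := by
      rw [mul_assoc, ← cau.eq, ← mul_assoc, ← pow_two, ← hs, bue]
    rw [hxa, ← mul_assoc, ← cae.eq, mul_assoc, euee]
  · -- IsNilpotent (a ^ 2 - a * (a * ue))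
    have hax : a * (a * ue) = e := by
      rw [← mul_assoc, ← pow_two, ← hs, bue]
    rw [hax, ← hs]
    exact ⟨n, qn⟩
end Hir



section Aux2
variable {R : Type*} [Ring R]


/-- Easy direction: a Hirano invertible element has `a² - a⁴` nilpotent. -/
theorem hirano_nilp {a : R} (h : IsHirano a) : IsNilpotent (a ^ 2 - a ^ 4) := by
  obtain ⟨x, hc, hx, hn⟩ := h
  set e : R := a * x with he'
  have he : e * e = e := by
    rw [he', mul_assoc, ← mul_assoc x a x, ← hx]
  have hea : e * a = a * e := by
    rw [he', mul_assoc, ← hc, ← mul_assoc]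
  set t : R := a ^ 2 - e with ht'
  have het : e * t = t * e := by
    rw [ht', mul_sub, sub_mul, he]
    congr 1
    rw [pow_two, ← mul_assoc, hea, mul_assoc, hea, ← mul_assoc]
  have key : IsNilpotent ((e + t) - (e + t) ^ 2) := nilpSubSq he het hn
  have h2 : e + t = a ^ 2 := by rw [ht']; abel
  rw [h2, ← pow_mul] at key
  exact key

/-- Additive: if `x*y = 0` and both have nilpotent `z²-z⁴`, so does their sum. -/
theorem hirano_add_nilp {x y : R} (hxy : x * y = 0)
    (hx : IsNilpotent (x ^ 2 - x ^ 4)) (hy : IsNilpotent (y ^ 2 - y ^ 4)) :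
    IsNilpotent ((x + y) ^ 2 - (x + y) ^ 4) := by
  have p2 : x ^ 2 * y = 0 := by rw [pow_two, mul_assoc, hxy, mul_zero]
  have p3 : x ^ 3 * y = 0 := by rw [pow_succ, mul_assoc, hxy, mul_zero]
  have p4 : x ^ 4 * y = 0 := by rw [pow_succ, mul_assoc, hxy, mul_zero]
  have e2 : (x + y) ^ 2 = x ^ 2 + y * x + y ^ 2 := by
    rw [addpow hxy 2]
    rw [Finset.sum_range_succ, Finset.sum_range_succ, Finset.sum_range_succ,
      Finset.sum_range_zero]
    simp
  have e4 : (x + y) ^ 4 = x ^ 4 + y * x ^ 3 + y ^ 2 * x ^ 2 + y ^ 3 * x + y ^ 4 := by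
    rw [addpow hxy 4]
    rw [Finset.sum_range_succ, Finset.sum_range_succ, Finset.sum_range_succ,
      Finset.sum_range_succ, Finset.sum_range_succ, Finset.sum_range_zero]
    simp [pow_succ]
  set E : R := x - x ^ 3 - y * x ^ 2 - y ^ 2 * x with hE
  have hre : (x + y) ^ 2 - (x + y) ^ 4
      = ((x ^ 2 - x ^ 4) + y * E) + (y ^ 2 - y ^ 4) := by
    rw [e2, e4, hE]; noncomm_ring
  rw [hre]
  have hAy : (x ^ 2 - x ^ 4) * y = 0 := by rw [sub_mul, p2, p4, sub_zero]
  have hEy : E * y = 0 := by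
    rw [hE, sub_mul, sub_mul, sub_mul, hxy, p3,
      mul_assoc y (x ^ 2) y, p2, mul_zero,
      mul_assoc (y ^ 2) x y, hxy, mul_zero]
    simp
  have hBfac : y ^ 2 - y ^ 4 = y * (y - y ^ 3) := by noncomm_ring
  have hAC : (x ^ 2 - x ^ 4) * (y * E) = 0 := by
    rw [← mul_assoc, hAy, zero_mul]
  have hCC : (y * E) * (y * E) = 0 := by
    rw [mul_assoc, ← mul_assoc E y E, hEy, zero_mul, mul_zero]
  have hXB : ((x ^ 2 - x ^ 4) + y * E) * (y ^ 2 - y ^ 4) = 0 := by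
    rw [hBfac, add_mul, ← mul_assoc, hAy, zero_mul,
      mul_assoc y E _, ← mul_assoc E y _, hEy, zero_mul, mul_zero, add_zero]
  obtain ⟨uA, hA⟩ := hx
  obtain ⟨uB, hB⟩ := hy
  have hX : ((x ^ 2 - x ^ 4) + y * E) ^ (uA + 2) = 0 := by
    apply nilpAdd hAC hA
    rw [pow_two, hCC]
  exact ⟨(uA + 2) + uB, nilpAdd hXB hX hB⟩

end Aux2



section Mat
variable {A : Type*} [Ring A]

theorem dpow (x z : A) (k : ℕ) :
    (!![x, 0; 0, z] : Matrix (Fin 2) (Fin 2) A) ^ k = !![x ^ k, 0; 0, z ^ k] := by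
  induction k with
  | zero => simp [Matrix.one_fin_two]
  | succ k ih =>
    rw [pow_succ, ih, Matrix.mul_fin_two]
    ext i j
    fin_cases i <;> fin_cases j <;> simp [pow_succ]

end Mat
section Main

/-- If `a, d` are Hirano invertible, `b * c` is strongly Drazin invertible with
strong Drazin inverse `bcD`, `bcD * a = 0`, `a * (bc)π = 0` and `b * d = 0`,
then `!![a, b; c, d]` is Hirano invertible in `M₂(A)`. -/
theorem hirano_two_by_two' {A : Type*} [NormedRing A] [NormedAlgebra ℂ A]
    [CompleteSpace A] (a b c d bcD : A) (ha : IsHirano a) (hd : IsHirano d)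
    (hbc : IsSDrazinInv (b * c) bcD)
    (h1 : bcD * a = 0) (h2 : a * (1 - b * c * bcD) = 0) (h3 : b * d = 0) :
    IsHirano (!![a, b; c, d] : Matrix (Fin 2) (Fin 2) A) := by
  obtain ⟨hcm, hiv, hnl⟩ := hbc
  -- scalar facts
  have h2' : a * (b * c * bcD) = a := by
    rw [mul_sub, mul_one, sub_eq_zero] at h2
    exact h2.symm
  have hpa : b * c * bcD * a = 0 := by
    rw [mul_assoc, h1, mul_zero]
  have haa : a * a = 0 := by
    nth_rewrite 1 [← h2']
    rw [mul_assoc, hpa, mul_zero]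
  have cαD : Commute (b * c) bcD := hcm
  have cpα : Commute (b * c * bcD) (b * c) :=
    Commute.mul_left (Commute.refl (b * c)) cαD.symm
  have haka : ∀ k : ℕ, a * ((b * c) ^ k * a) = 0 := by
    intro k
    nth_rewrite 1 [← h2']
    rw [mul_assoc, ← mul_assoc (b * c * bcD) ((b * c) ^ k) a, (cpα.pow_right k).eq,
      mul_assoc ((b * c) ^ k) (b * c * bcD) a, hpa, mul_zero, mul_zero]
  have hDa : ∀ k : ℕ, bcD ^ (k + 1) * a = 0 := by
    intro k
    rw [pow_succ, mul_assoc, h1, mul_zero]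
  obtain ⟨n₀, hn₀⟩ := hnl
  have cαt : Commute (b * c) (b * c - b * c * bcD) :=
    (Commute.refl (b * c)).sub_right ((Commute.refl (b * c)).mul_right cαD)
  have hαka0 : ∀ k : ℕ, (b * c) ^ k * a = (b * c - b * c * bcD) ^ k * a := by
    intro k
    induction k with
    | zero => simp
    | succ k ih =>
      have hba : (b * c) * a = (b * c - b * c * bcD) * a := by
        rw [sub_mul, hpa, sub_zero]
      rw [pow_succ', mul_assoc, ih, ← mul_assoc, (cαt.pow_right k).eq,
        mul_assoc, hba, ← mul_assoc, ← pow_succ]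
  have hbig : (b * c) ^ (n₀ + 1) * a = 0 := by
    rw [hαka0, pow_succ, hn₀, zero_mul, zero_mul]
  have hDα : ∀ k : ℕ, bcD ^ (k + 2) * (b * c) = bcD ^ (k + 1) := by
    intro k
    calc bcD ^ (k + 2) * (b * c) = bcD ^ k * (bcD * (bcD * (b * c))) := by
          rw [pow_add, pow_two, mul_assoc, mul_assoc]
      _ = bcD ^ k * (bcD * (b * c * bcD)) := by rw [← hcm]
      _ = bcD ^ k * (bcD * (b * c) * bcD) := by rw [← mul_assoc bcD (b * c) bcD]
      _ = bcD ^ k * bcD := by rw [← hiv]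
      _ = bcD ^ (k + 1) := by rw [← pow_succ]
  -- the conjugator element
  set hh : A := ∑ k ∈ Finset.range (n₀ + 1), (b * c) ^ k * a * bcD ^ (k + 1) with hhdef
  have zha : hh * a = 0 := by
    rw [hhdef, Finset.sum_mul]
    apply Finset.sum_eq_zero
    intro k _
    rw [mul_assoc, hDa, mul_zero]
  have zaαh : a * (b * c * hh) = 0 := by
    rw [hhdef, Finset.mul_sum, Finset.mul_sum]
    apply Finset.sum_eq_zero
    intro k _
    rw [← mul_assoc (b * c) ((b * c) ^ k * a) (bcD ^ (k + 1)),
      ← mul_assoc (b * c) ((b * c) ^ k) a, ← pow_succ',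
      ← mul_assoc a ((b * c) ^ (k + 1) * a) (bcD ^ (k + 1)),
      ← mul_assoc a ((b * c) ^ (k + 1)) a] -- careful
    rw [mul_assoc a ((b * c) ^ (k+1)) a, haka, zero_mul]
  have hterm : ∀ k : ℕ, (b * c) * ((b * c) ^ k * a * bcD ^ (k + 1))
      = (b * c) ^ (k + 1) * a * bcD ^ (k + 1) := by
    intro k
    rw [← mul_assoc (b * c) ((b * c) ^ k * a) (bcD ^ (k + 1)),
      ← mul_assoc (b * c) ((b * c) ^ k) a, ← pow_succ']
  have hsummand : ∀ k : ℕ, ((b * c) ^ k * a * bcD ^ (k + 1)) * (b * c)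
      = (b * c) ^ k * a * bcD ^ k := by
    intro k
    cases k with
    | zero =>
      simp only [pow_zero, zero_add, pow_one, one_mul, mul_one]
      rw [mul_assoc, ← hcm]
      exact h2'
    | succ k =>
      rw [mul_assoc ((b * c) ^ (k + 1) * a) (bcD ^ (k + 2)) (b * c), hDα k]
  have zh11 : hh * (b * c) = a + (b * c) * hh := by
    have hL : hh * (b * c) = a + ∑ k ∈ Finset.range n₀,
        (b * c) ^ (k + 1) * a * bcD ^ (k + 1) := by
      rw [hhdef, Finset.sum_mul, Finset.sum_congr rfl (fun k _ => hsummand k),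
        Finset.sum_range_succ' (fun k => (b * c) ^ k * a * bcD ^ k) n₀]
      simp [add_comm]
    have hR : (b * c) * hh = ∑ k ∈ Finset.range n₀,
        (b * c) ^ (k + 1) * a * bcD ^ (k + 1) := by
      rw [hhdef, Finset.mul_sum, Finset.sum_congr rfl (fun k _ => hterm k),
        Finset.sum_range_succ (fun k => (b * c) ^ (k + 1) * a * bcD ^ (k + 1)) n₀,
        hbig, zero_mul, add_zero]
    rw [hL, hR]
  -- nilpotency of b*c - (b*c)^2
  have hpp' : (b * c * bcD) * (b * c * bcD) = b * c * bcD := by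
    rw [mul_assoc (b * c) bcD (b * c * bcD), ← mul_assoc bcD (b * c) bcD, ← hiv]
  have hptc : (b * c * bcD) * (b * c - b * c * bcD) = (b * c - b * c * bcD) * (b * c * bcD) := by
    rw [mul_sub, sub_mul, hpp', cpα.eq]
  have hνnil : IsNilpotent (b * c - (b * c) ^ 2) := by
    have key := nilpSubSq hpp' hptc ⟨n₀, hn₀⟩
    have hpt : b * c * bcD + (b * c - b * c * bcD) = b * c := by abel
    rw [hpt] at key
    exact key
  obtain ⟨n₁, hν⟩ := hνnil
  -- nilpotency of c*b - (c*b)^2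
  have hwrec : ∀ j : ℕ, (c * ((1 - b * c) * b)) ^ (j + 1)
      = c * ((b * c - (b * c) ^ 2) ^ j * ((1 - b * c) * b)) := by
    intro j
    induction j with
    | zero => rw [pow_one, pow_zero, one_mul]
    | succ j ih =>
      rw [pow_succ, ih, mul_assoc]
      congr 1
      rw [mul_assoc ((b * c - (b * c) ^ 2) ^ j) ((1 - b * c) * b) (c * ((1 - b * c) * b)),
        ← mul_assoc ((1 - b * c) * b) c ((1 - b * c) * b),
        mul_assoc (1 - b * c) b c]
      have hwc : (1 - b * c) * (b * c) = b * c - (b * c) ^ 2 := by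
        rw [sub_mul, one_mul, ← pow_two]
      rw [hwc, ← mul_assoc, ← pow_succ]
  have hμnil : IsNilpotent (c * b - (c * b) ^ 2) := by
    have heq : c * b - (c * b) ^ 2 = c * ((1 - b * c) * b) := by
      have hr : c * ((1 - b * c) * b) = c * b - c * (b * c * b) := by
        rw [sub_mul, one_mul, mul_sub]
      rw [hr]
      congr 1
      rw [pow_two, mul_assoc c b (c * b), ← mul_assoc b c b]
    rw [heq]
    exact ⟨n₁ + 1, by rw [hwrec n₁, hν, zero_mul, mul_zero]⟩
  obtain ⟨n₂, hμ⟩ := hμnil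
  -- now the matrix part
  apply hirano_of_nilpotent_s7
  have hM : (!![a, b; c, d] : Matrix (Fin 2) (Fin 2) A) = !![a, b; c, 0] + !![0, 0; 0, d] := by
    ext i j; fin_cases i <;> fin_cases j <;> simp
  rw [hM]
  apply hirano_add_nilp
  · -- P * Q = 0
    rw [Matrix.mul_fin_two]
    ext i j; fin_cases i <;> fin_cases j <;> simp [h3]
  · -- IsNilpotent (P^2 - P^4)
    have hS : (!![a, b; c, 0] : Matrix (Fin 2) (Fin 2) A) ^ 2 = !![b * c, a * b; c * a, c * b] := by
      rw [pow_two, Matrix.mul_fin_two]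
      ext i j; fin_cases i <;> fin_cases j <;> simp [haa]
    have hP4 : (!![a, b; c, 0] : Matrix (Fin 2) (Fin 2) A) ^ 4
        = ((!![a, b; c, 0] : Matrix (Fin 2) (Fin 2) A) ^ 2) ^ 2 := by
      rw [← pow_mul]
    rw [hP4, hS]
    -- similarity facts
    have zf1 : a * (b * (c * hh)) = 0 := by
      rw [← mul_assoc b c hh]; exact zaαh
    have f22 : hh * (a * b) = 0 := by
      rw [← mul_assoc, zha, zero_mul]
    have f21 : c * (hh * (b * c)) = c * a + c * (b * (c * hh)) := by
      rw [zh11, mul_add, mul_assoc b c hh]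
    have hGGi : (!![1, 0; c * hh, 1] : Matrix (Fin 2) (Fin 2) A) * !![1, 0; -(c * hh), 1] = 1 := by
      rw [Matrix.mul_fin_two, Matrix.one_fin_two]
      ext i j; fin_cases i <;> fin_cases j <;> simp
    have hGiG : (!![1, 0; -(c * hh), 1] : Matrix (Fin 2) (Fin 2) A) * !![1, 0; c * hh, 1] = 1 := by
      rw [Matrix.mul_fin_two, Matrix.one_fin_two]
      ext i j; fin_cases i <;> fin_cases j <;> simp
    have hSG : (!![b * c, a * b; c * a, c * b] : Matrix (Fin 2) (Fin 2) A) * !![1, 0; c * hh, 1]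
        = !![1, 0; c * hh, 1] * !![b * c, a * b; 0, c * b] := by
      rw [Matrix.mul_fin_two, Matrix.mul_fin_two]
      ext i j; fin_cases i <;> fin_cases j <;> simp [mul_assoc, zf1, f21, f22]
    have hconj : (!![b * c, a * b; c * a, c * b] : Matrix (Fin 2) (Fin 2) A)
        = !![1, 0; c * hh, 1] * !![b * c, a * b; 0, c * b] * !![1, 0; -(c * hh), 1] := by
      rw [← hSG, mul_assoc, hGGi, mul_one]
    -- the triangular matrix is nilpotent after subtracting its square
    have hS' : IsNilpotent ((!![b * c, a * b; 0, c * b] : Matrix (Fin 2) (Fin 2) A)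
        - (!![b * c, a * b; 0, c * b] : Matrix (Fin 2) (Fin 2) A) ^ 2) := by
      have hsq : (!![b * c, a * b; 0, c * b] : Matrix (Fin 2) (Fin 2) A) ^ 2
          = !![(b * c) ^ 2, b * c * (a * b) + a * b * (c * b); 0, (c * b) ^ 2] := by
        rw [pow_two, Matrix.mul_fin_two]
        ext i j; fin_cases i <;> fin_cases j <;> simp [pow_two]
      rw [hsq]
      have hsub : (!![b * c, a * b; 0, c * b] : Matrix (Fin 2) (Fin 2) A)
          - !![(b * c) ^ 2, b * c * (a * b) + a * b * (c * b); 0, (c * b) ^ 2]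
          = !![b * c - (b * c) ^ 2, 0; 0, c * b - (c * b) ^ 2]
            + !![0, a * b - (b * c * (a * b) + a * b * (c * b)); 0, 0] := by
        ext i j; fin_cases i <;> fin_cases j <;> simp
      rw [hsub]
      refine ⟨2 * (n₁ + n₂) + 1, nilpSand ?_ ?_⟩
      · intro j
        rw [dpow, Matrix.mul_fin_two, Matrix.mul_fin_two]
        ext i j'; fin_cases i <;> fin_cases j' <;> simp
      · rw [dpow]
        have e1 : (b * c - (b * c) ^ 2) ^ (n₁ + n₂) = 0 := by
          rw [pow_add, hν, zero_mul]
        have e2 : (c * b - (c * b) ^ 2) ^ (n₁ + n₂) = 0 := by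
          rw [pow_add, hμ, mul_zero]
        rw [e1, e2]
        ext i j; fin_cases i <;> fin_cases j <;> simp
    rw [hconj]
    have hGi' : ∀ Z : Matrix (Fin 2) (Fin 2) A,
        !![1, 0; -(c * hh), 1] * (!![1, 0; c * hh, 1] * Z) = Z := by
      intro Z; rw [← mul_assoc, hGiG, one_mul]
    have h2sq : (!![1, 0; c * hh, 1] * !![b * c, a * b; 0, c * b] * !![1, 0; -(c * hh), 1]) ^ 2
        = !![1, 0; c * hh, 1] * (!![b * c, a * b; 0, c * b]) ^ 2 * !![1, 0; -(c * hh), 1] := by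
      rw [pow_two, pow_two]
      simp only [mul_assoc, hGi']
    rw [h2sq]
    have hdiff : !![1, 0; c * hh, 1] * !![b * c, a * b; 0, c * b] * !![1, 0; -(c * hh), 1]
        - !![1, 0; c * hh, 1] * (!![b * c, a * b; 0, c * b]) ^ 2 * !![1, 0; -(c * hh), 1]
        = !![1, 0; c * hh, 1] * ((!![b * c, a * b; 0, c * b])
            - (!![b * c, a * b; 0, c * b]) ^ 2) * !![1, 0; -(c * hh), 1] := by
      rw [mul_sub, sub_mul]
    rw [hdiff]
    exact conjNilp hGiG hS'
  · -- IsNilpotent (Q^2 - Q^4)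
    have hQ2 := dpow (0 : A) d 2
    have hQ4 := dpow (0 : A) d 4
    rw [hQ2, hQ4]
    have hsub : (!![(0:A) ^ 2, 0; 0, d ^ 2] : Matrix (Fin 2) (Fin 2) A) - !![(0:A) ^ 4, 0; 0, d ^ 4]
        = !![0, 0; 0, d ^ 2 - d ^ 4] := by
      ext i j; fin_cases i <;> fin_cases j <;> simp
    rw [hsub]
    obtain ⟨k, hk⟩ := hirano_nilp hd
    refine ⟨k + 1, ?_⟩
    rw [dpow]
    have : (d ^ 2 - d ^ 4) ^ (k + 1) = 0 := by rw [pow_succ, hk, zero_mul]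
    rw [this]
    ext i j; fin_cases i <;> fin_cases j <;> simp

end Main
end

section
/- Let A be a complex Banach algebra with identity and let a, b ∈ A both be strongly Drazin invertible, with b^D the strongly Drazin inverse of b. If b^D a = 0 and ab = ba, then the 2×2 anti-triangular matrix with rows (a, 1) and (b, 0) is Hirano invertible in M₂(A). -/
section AuxRing
variable {R : Type*} [Ring R]

/-- Binomial-style expansion: `(1 - y)^m = 1 - s * y` for some `s`. -/
lemma one_sub_pow_eq_one_sub_mul (y : R) : ∀ m : ℕ, ∃ s : R, (1 - y) ^ m = 1 - s * y
  | 0 => ⟨0, by simp⟩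
  | m + 1 => by
    obtain ⟨s, hs⟩ := one_sub_pow_eq_one_sub_mul y m
    refine ⟨1 + s - s * y, ?_⟩
    rw [pow_succ, hs]
    noncomm_ring

/-- Lifting idempotents along nilpotents, by Newton iteration. -/
lemma idem_lift : ∀ (k : ℕ) (z : R), (z - z ^ 2) ^ (2 ^ k) = 0 →
    ∃ e : R, e * e = e ∧ IsNilpotent (z - e) ∧ ∀ r, Commute z r → Commute e r
  | 0, z, h => by
    have hz : z - z ^ 2 = 0 := by simpa using h
    have hz' : z * z = z := by
      have := sub_eq_zero.mp hz
      rw [pow_two] at this; exact this.symm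
    exact ⟨z, hz', by simp, fun r hr => hr⟩
  | k + 1, z, h => by
    set f : R := 3 * z ^ 2 - 2 * z ^ 3 with hf
    have hcf : ∀ r, Commute z r → Commute f r := fun r hr =>
      ((Commute.ofNat_left 3 r).mul_left (hr.pow_left 2)).sub_left
        ((Commute.ofNat_left 2 r).mul_left (hr.pow_left 3))
    have hkey : f - f ^ 2 = (z - z ^ 2) ^ 2 * ((3 - 2 * z) * (1 + 2 * z)) := by
      rw [hf]; noncomm_ring
    have hcw : Commute ((z - z ^ 2) ^ 2) ((3 - 2 * z) * (1 + 2 * z)) := by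
      unfold Commute SemiconjBy; noncomm_ring
    have hf0 : (f - f ^ 2) ^ (2 ^ k) = 0 := by
      rw [hkey, hcw.mul_pow, ← pow_mul]
      have h2 : 2 * 2 ^ k = 2 ^ (k + 1) := by rw [pow_succ, mul_comm]
      rw [h2, h, zero_mul]
    obtain ⟨e, he, hnil, hcom⟩ := idem_lift k f hf0
    refine ⟨e, he, ?_, fun r hr => hcom r (hcf r hr)⟩
    have hzf : z - f = (z - z ^ 2) * (1 - 2 * z) := by rw [hf]; noncomm_ring
    have hznil : IsNilpotent (z - f) := by
      rw [hzf]
      have hc : Commute (z - z ^ 2) (1 - 2 * z) := by unfold Commute SemiconjBy; noncomm_ring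
      exact hc.isNilpotent_mul_right ⟨2 ^ (k + 1), h⟩
    have hcz : Commute z (z - f) := by unfold Commute SemiconjBy; rw [hf]; noncomm_ring
    have hce : Commute e (z - f) := hcom _ (hcf _ hcz)
    have hcfz : Commute f (z - f) := hcf _ hcz
    have hcomm : Commute (z - f) (f - e) := (hcfz.symm.sub_right hce.symm)
    have : z - e = (z - f) + (f - e) := by abel
    rw [this]
    exact hcomm.isNilpotent_add hznil hnil

/-- A strong-Drazin-type inverse for `z` when `z - z²` is nilpotent, commuting with
everything that commutes with `z`. -/
lemma exists_sd (z : R) (h : IsNilpotent (z - z ^ 2)) :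
    ∃ y : R, z * y = y * z ∧ y * z * y = y ∧ IsNilpotent (z - z * y) ∧
      ∀ r, Commute z r → Commute y r := by
  obtain ⟨n, hn⟩ := h
  have h2 : (z - z ^ 2) ^ (2 ^ n) = 0 :=
    pow_eq_zero_of_le (Nat.le_of_lt (Nat.lt_two_pow_self (n := n))) hn
  obtain ⟨e, he, hnil, hcom⟩ := idem_lift n z h2
  have hez : Commute e z := hcom z (Commute.refl z)
  have hze : (z - e) * e = z * e - e := by rw [sub_mul, he]
  have hkey : (1 - z) * e = -((z - e) * e) := by rw [hze]; noncomm_ring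
  have hcz_ze : Commute (z - e) e := (hez.symm.sub_left (Commute.refl e))
  have hn' : IsNilpotent ((1 - z) * e) := by
    rw [hkey]; exact (hcz_ze.isNilpotent_mul_right hnil).neg
  have hu : IsUnit (1 - (1 - z) * e) := hn'.isUnit_one_sub
  obtain ⟨u, hu_eq⟩ := hu
  have hce1z : Commute e (1 - z) := hcom _ ((Commute.one_right z).sub_right (Commute.refl z))
  have hcs_z : Commute z (1 - (1 - z) * e) :=
    (Commute.one_right z).sub_right
      (((Commute.one_right z).sub_right (Commute.refl z)).mul_right hez.symm)
  have hcs_e : Commute e (1 - (1 - z) * e) :=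
    (Commute.one_right e).sub_right (hce1z.mul_right (Commute.refl e))
  have hcu_z : Commute z (u : R) := by rw [hu_eq]; exact hcs_z
  have hcu_e : Commute e (u : R) := by rw [hu_eq]; exact hcs_e
  have hinv_z : Commute z ((u⁻¹ : Rˣ) : R) := hcu_z.units_inv_right
  have hinv_e : Commute e ((u⁻¹ : Rˣ) : R) := hcu_e.units_inv_right
  set y : R := ((u⁻¹ : Rˣ) : R) * e with hy
  have hse : (1 - (1 - z) * e) * e = z * e := by
    have : (1 - (1 - z) * e) * e = e - (1 - z) * (e * e) := by noncomm_ring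
    rw [this, he]; noncomm_ring
  have hzy : z * y = e := by
    rw [hy, ← mul_assoc, hinv_z.eq, mul_assoc, ← hse, ← hu_eq, ← mul_assoc,
      Units.inv_mul, one_mul]
  have hcyz : Commute z y := hinv_z.mul_right hez.symm
  refine ⟨y, hcyz.eq, ?_, ?_, ?_⟩
  · rw [← hcyz.eq, hzy, hy, ← mul_assoc, hinv_e.eq, mul_assoc, he]
  · rw [hzy]; exact hnil
  · intro r hr
    have hce_r : Commute e r := hcom r hr
    have hcs_r : Commute (1 - (1 - z) * e) r :=
      (Commute.one_left r).sub_left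
        (((Commute.one_left r).sub_left hr).mul_left hce_r)
    have hcu_r : Commute ((u : R)) r := by rw [hu_eq]; exact hcs_r
    exact (hcu_r.units_inv_left).mul_left hce_r

/-- If `x - x³` is nilpotent then `x` is Hirano invertible. -/
lemma isHirano_of_nilpotent (x : R) (h : IsNilpotent (x - x ^ 3)) : IsHirano x := by
  have hz : IsNilpotent (x ^ 2 - (x ^ 2) ^ 2) := by
    have hid : x ^ 2 - (x ^ 2) ^ 2 = x * (x - x ^ 3) := by noncomm_ring
    have hc : Commute x (x - x ^ 3) := by unfold Commute SemiconjBy; noncomm_ring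
    rw [hid]; exact hc.isNilpotent_mul_left h
  obtain ⟨y, hzy, hyzy, hnil, hcom⟩ := exists_sd (x ^ 2) hz
  have hxy : Commute y x := hcom x ((Commute.refl x).pow_left 2)
  refine ⟨x * y, ?_, ?_, ?_⟩
  · simp only [mul_assoc]; rw [hxy.eq]
  · have hyzy' : y * (x * x) * y = y := by rw [← pow_two]; exact hyzy
    calc x * y = x * (y * (x * x) * y) := by rw [hyzy']
      _ = x * y * x * (x * y) := by simp only [mul_assoc]
  · have : x * (x * y) = x ^ 2 * y := by rw [← mul_assoc, ← pow_two]
    rw [this]; exact hnil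

/-- A strongly Drazin invertible element satisfies `x - x²` nilpotent. -/
lemma nil_of_sd {x y : R} (h : IsSDrazinInv x y) : IsNilpotent (x - x ^ 2) := by
  obtain ⟨hc, hy, hn⟩ := h
  have h1 : (x * y) * x = x * (x * y) := by rw [mul_assoc, ← hc, ← mul_assoc]
  have e2 : (x * y) * (x * y) = x * (y * x * y) := by
    rw [mul_assoc x y (x * y), ← mul_assoc y x y]
  have e2' : (x * y) * (x * y) = x * y := by rw [e2, ← hy]
  have key : x - x ^ 2 = (x - x * y) * (1 - x - x * y) := by
    have expand : (x - x * y) * (1 - x - x * y)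
        = (x - x * x - x * (x * y)) - ((x * y) - (x * y) * x - (x * y) * (x * y)) := by
      noncomm_ring
    rw [expand, e2', h1]; noncomm_ring
  rw [key]
  have cnx : Commute (x - x * y) (1 - x - x * y) := by
    have c1 : Commute (x - x * y) x :=
      (Commute.refl x).sub_left (show Commute (x * y) x from h1)
    have c2 : Commute (x - x * y) (x * y) :=
      (show Commute x (x * y) from h1.symm).sub_left (Commute.refl (x * y))
    exact ((Commute.one_right _).sub_right c1).sub_right c2
  exact cnx.isNilpotent_mul_right hn

end AuxRing

/-- Over a commutative ring, `!![a,1;b,0] - !![a,1;b,0]^3` is nilpotent when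
`a - a²`, `b - b²` are nilpotent and `bᵐ a = 0`. -/
lemma key_matrix {S : Type*} [CommRing S] (a b : S) (hA : IsNilpotent (a - a ^ 2))
    (hB : IsNilpotent (b - b ^ 2)) (m : ℕ) (hm : b ^ m * a = 0) :
    IsNilpotent ((!![a, 1; b, 0] : Matrix (Fin 2) (Fin 2) S)
      - (!![a, 1; b, 0] : Matrix (Fin 2) (Fin 2) S) ^ 3) := by
  have hm' : b ^ (m + 1) * a = 0 := by
    calc b ^ (m + 1) * a = b * (b ^ m * a) := by ring
      _ = 0 := by rw [hm, mul_zero]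
  have hab : IsNilpotent (a * b) := by
    refine ⟨m + 1, ?_⟩
    calc (a * b) ^ (m + 1) = a ^ m * (b ^ (m + 1) * a) := by ring
      _ = 0 := by rw [hm', mul_zero]
  have ha2b : IsNilpotent (a ^ 2 * b) := by
    have : a ^ 2 * b = a * (a * b) := by ring
    rw [this]; exact (Commute.all _ _).isNilpotent_mul_left hab
  set α : S := a - a ^ 3 - 2 * (a * b) with hαd
  set β : S := 1 - a ^ 2 - b with hβd
  set γ : S := b - a ^ 2 * b - b ^ 2 with hγd
  set δ : S := -(a * b) with hδd
  set N : Matrix (Fin 2) (Fin 2) S := !![α, β; γ, δ] with hNd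
  have hN : (!![a, 1; b, 0] : Matrix (Fin 2) (Fin 2) S) - !![a, 1; b, 0] ^ 3 = N := by
    have h3 : (!![a, 1; b, 0] : Matrix (Fin 2) (Fin 2) S) ^ 3
        = !![a, 1; b, 0] * !![a, 1; b, 0] * !![a, 1; b, 0] := by
      rw [pow_succ, pow_succ, pow_one]
    rw [h3, Matrix.mul_fin_two, Matrix.mul_fin_two, hNd, hαd, hβd, hγd, hδd]
    ext i j
    fin_cases i <;> fin_cases j <;> simp <;> ring
  rw [hN]
  have hα : IsNilpotent α := by
    have : α = ((a - a ^ 2) + a * (a - a ^ 2)) - 2 * (a * b) := by rw [hαd]; ring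
    rw [this]
    exact (Commute.all _ _).isNilpotent_sub
      ((Commute.all _ _).isNilpotent_add hA ((Commute.all _ _).isNilpotent_mul_left hA))
      ((Commute.all _ _).isNilpotent_mul_left hab)
  have hγ : IsNilpotent γ := by
    have : γ = (b - b ^ 2) - a ^ 2 * b := by rw [hγd]; ring
    rw [this]; exact (Commute.all _ _).isNilpotent_sub hB ha2b
  have hδ : IsNilpotent δ := by rw [hδd]; exact hab.neg
  set t : S := α + δ with htd
  set d : S := α * δ - β * γ with hdd
  have ht : IsNilpotent t := (Commute.all _ _).isNilpotent_add hα hδ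
  have hd : IsNilpotent d := (Commute.all _ _).isNilpotent_sub
    ((Commute.all _ _).isNilpotent_mul_left hδ) ((Commute.all _ _).isNilpotent_mul_left hγ)
  have hCH : N * N = t • N - d • (1 : Matrix (Fin 2) (Fin 2) S) := by
    rw [hNd, htd, hdd]
    ext i j
    fin_cases i <;> fin_cases j <;>
      simp [Matrix.mul_apply, Fin.sum_univ_two, Matrix.one_apply] <;> ring
  have h1 : IsNilpotent (t • N) := by
    obtain ⟨k, hk⟩ := ht
    exact ⟨k, by rw [smul_pow, hk, zero_smul]⟩
  have h2 : IsNilpotent (d • (1 : Matrix (Fin 2) (Fin 2) S)) := by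
    obtain ⟨k, hk⟩ := hd
    exact ⟨k, by rw [smul_pow, hk, zero_smul]⟩
  have hc : Commute (t • N) (d • (1 : Matrix (Fin 2) (Fin 2) S)) := by
    show _ * _ = _ * _
    rw [smul_mul_assoc, mul_smul_comm, mul_one, smul_mul_assoc, mul_smul_comm, one_mul,
      smul_smul, smul_smul, mul_comm t d]
  have hNN : IsNilpotent (N * N) := by
    rw [hCH]; exact hc.isNilpotent_sub h1 h2
  obtain ⟨k, hk⟩ := hNN
  exact ⟨2 * k, by rw [pow_mul, pow_two, hk]⟩

/-- The same over a noncommutative ring, assuming `a` and `b` commute. -/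
lemma key_matrix' {A : Type*} [Ring A] (a b : A) (h2 : a * b = b * a)
    (hpa : IsNilpotent (a - a ^ 2)) (hpb : IsNilpotent (b - b ^ 2))
    (n : ℕ) (hbna : b ^ n * a = 0) :
    IsNilpotent ((!![a, 1; b, 0] : Matrix (Fin 2) (Fin 2) A)
      - (!![a, 1; b, 0] : Matrix (Fin 2) (Fin 2) A) ^ 3) := by
  have hcomm : ∀ x ∈ ({a, b} : Set A), ∀ y ∈ ({a, b} : Set A), x * y = y * x := by
    rintro x (rfl | rfl) y (rfl | rfl) <;> simp [h2]
  set S := Subring.closure ({a, b} : Set A) with hS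
  let CR : CommRing ↥S := Subring.closureCommRingOfComm hcomm
  have haS : a ∈ S := Subring.subset_closure (by simp)
  have hbS : b ∈ S := Subring.subset_closure (by simp)
  let a' : ↥S := ⟨a, haS⟩
  let b' : ↥S := ⟨b, hbS⟩
  let φ : ↥S →+* A := S.subtype
  have hφinj : Function.Injective φ := Subtype.coe_injective
  have hφa : φ a' = a := rfl
  have hφb : φ b' = b := rfl
  have hA' : IsNilpotent (a' - a' ^ 2) := by
    obtain ⟨k, hk⟩ := hpa
    refine ⟨k, hφinj ?_⟩
    rw [map_pow, map_sub, map_pow, map_zero, hφa, hk]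
  have hB' : IsNilpotent (b' - b' ^ 2) := by
    obtain ⟨k, hk⟩ := hpb
    refine ⟨k, hφinj ?_⟩
    rw [map_pow, map_sub, map_pow, map_zero, hφb, hk]
  have hm' : b' ^ n * a' = 0 := by
    refine hφinj ?_
    rw [map_mul, map_pow, map_zero, hφa, hφb, hbna]
  have hkey := @key_matrix ↥S CR a' b' hA' hB' n hm'
  have hres := hkey.map (φ.mapMatrix)
  have hmap : (φ.mapMatrix) ((!![a', 1; b', 0] : Matrix (Fin 2) (Fin 2) ↥S)
      - !![a', 1; b', 0] ^ 3)
      = (!![a, 1; b, 0] : Matrix (Fin 2) (Fin 2) A) - !![a, 1; b, 0] ^ 3 := by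
    rw [map_sub, map_pow]
    have : (φ.mapMatrix) (!![a', 1; b', 0] : Matrix (Fin 2) (Fin 2) ↥S) = !![a, 1; b, 0] := by
      ext i j
      fin_cases i <;> fin_cases j <;>
        simp [RingHom.mapMatrix_apply, Matrix.map_apply, hφa, hφb]
    rw [this]
  rwa [hmap] at hres

/-- If `a, b` are both strongly Drazin invertible, `bD` is the strong Drazin
inverse of `b`, `bD * a = 0` and `a * b = b * a`, then `!![a, 1; b, 0]`
is Hirano invertible in `M₂(A)`. -/
theorem hirano_anti_triangular_commute {A : Type*} [NormedRing A] [NormedAlgebra ℂ A]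
    [CompleteSpace A] (a b bD : A) (ha : ∃ y, IsSDrazinInv a y) (hb : IsSDrazinInv b bD)
    (h1 : bD * a = 0) (h2 : a * b = b * a) :
    IsHirano (!![a, 1; b, (0 : A)] : Matrix (Fin 2) (Fin 2) A) := by
  obtain ⟨ya, hya⟩ := ha
  have hpa : IsNilpotent (a - a ^ 2) := nil_of_sd hya
  have hpb : IsNilpotent (b - b ^ 2) := nil_of_sd hb
  -- derive b ^ n * a = 0
  obtain ⟨hcb, hby, hbnil⟩ := hb
  obtain ⟨n, hn⟩ := hbnil
  have hfact : b - b * bD = b * (1 - bD) := by noncomm_ring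
  have hcomm : Commute b (1 - bD) := (Commute.one_right b).sub_right hcb
  have hpow : b ^ n * (1 - bD) ^ n = 0 := by
    rw [← hcomm.mul_pow, ← hfact, hn]
  obtain ⟨s, hs⟩ := one_sub_pow_eq_one_sub_mul bD n
  have hbna : b ^ n * a = 0 := by
    have key : b ^ n * a = (b ^ n * (1 - bD) ^ n) * a + b ^ n * (s * (bD * a)) := by
      rw [hs]; noncomm_ring
    rw [key, hpow, h1, zero_mul, mul_zero, mul_zero, add_zero]
  exact isHirano_of_nilpotent _ (key_matrix' a b h2 hpa hpb n hbna)
end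

section
/- Let A be a complex Banach algebra with identity and let b ∈ A. Then b is strongly Drazin invertible if and only if b − b² is nilpotent, and this holds if and only if b is the sum of an idempotent and a nilpotent that commute with each other. -/
/-- From a commuting idempotent-plus-nilpotent decomposition, construct a strong
Drazin inverse. -/
lemma exists_sdrazin_of_decomp {A : Type*} [Ring A] {b p n : A}
    (hp : p ^ 2 = p) (hn : IsNilpotent n) (hpn : p * n = n * p) (hb : b = p + n) :
    ∃ y, IsSDrazinInv b y := by
  have hp' : p * p = p := by rw [← pow_two]; exact hp
  have hu : IsUnit (1 + n) := hn.isUnit_one_add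
  set u := hu.unit with hu_def
  have huv : (u : A) = 1 + n := hu.unit_spec
  have hcpn : Commute p n := hpn
  have hcpu : Commute p (u : A) := by
    rw [huv]; exact (Commute.one_right p).add_right hcpn
  have hcpu' : Commute p ((u⁻¹ : Aˣ) : A) := hcpu.units_inv_right
  have hcnu : Commute n (u : A) := by
    rw [huv]; exact (Commute.one_right n).add_right (Commute.refl n)
  have hcnu' : Commute n ((u⁻¹ : Aˣ) : A) := hcnu.units_inv_right
  set y : A := p * ((u⁻¹ : Aˣ) : A) with hy_def
  -- y commutes with b
  have hcyb : Commute y b := by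
    rw [hb]
    exact ((Commute.refl p).mul_left hcpu'.symm).add_right (hcpn.mul_left hcnu'.symm)
  -- b * y = p
  have hkey : (p + n) * p = p * (1 + n) := by
    rw [add_mul, mul_add, mul_one, hpn, hp']
  have hby : b * y = p := by
    rw [hy_def, hb, ← mul_assoc, hkey, mul_assoc, ← huv, Units.mul_inv, mul_one]
  have hyb : y * b = p := by rw [hcyb.eq, hby]
  refine ⟨y, hcyb.symm.eq, ?_, ?_⟩
  · -- y = y * b * y
    rw [hyb, hy_def, ← mul_assoc, hp']
  · -- b - b * y nilpotent
    rw [hby, hb, add_sub_cancel_left]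
    exact hn

/-- A strong Drazin inverse yields a commuting idempotent-plus-nilpotent
decomposition. -/
lemma decomp_of_sdrazin {A : Type*} [Ring A] {b y : A} (h : IsSDrazinInv b y) :
    ∃ p n : A, p ^ 2 = p ∧ IsNilpotent n ∧ p * n = n * p ∧ b = p + n := by
  obtain ⟨hcomm, hyby, hnil⟩ := h
  have hcby : Commute b y := hcomm
  refine ⟨b * y, b - b * y, ?_, hnil, ?_, by abel⟩
  · -- (b*y)^2 = b*y
    have h1 : b * y * (b * y) = b * (y * b * y) := by
      rw [mul_assoc, ← mul_assoc y b y]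
    rw [pow_two, h1, ← hyby]
  · have hc : Commute (b * y) (b - b * y) := by
      have h2 : Commute (b * y) b := (Commute.refl b).mul_left hcby.symm
      exact h2.sub_right (Commute.refl (b * y))
    exact hc.eq

/-- If `b - b ^ 2` is nilpotent then `b` decomposes as a commuting idempotent plus
nilpotent. -/
lemma decomp_of_nilpotent {A : Type*} [Ring A] {b : A} (h : IsNilpotent (b - b ^ 2)) :
    ∃ p n : A, p ^ 2 = p ∧ IsNilpotent n ∧ p * n = n * p ∧ b = p + n := by
  obtain ⟨m, hm⟩ := h
  have hm1 : (b - b ^ 2) ^ (m + 1) = 0 := by rw [pow_succ, hm, zero_mul]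
  set k := m + 1 with hk
  have hk0 : k ≠ 0 := Nat.succ_ne_zero m
  set e : A := 1 - (1 - b ^ k) ^ k with he_def
  have he : IsIdempotentElem e := isIdempotentElem_one_sub_one_sub_pow_pow b k hm1
  have hcbe : Commute b e := by
    have h1 : Commute b (b ^ k) := (Commute.refl b).pow_right k
    have h2 : Commute b ((1 - b ^ k) ^ k) := ((Commute.one_right b).sub_right h1).pow_right k
    exact (Commute.one_right b).sub_right h2
  have hdvd : (Polynomial.X - Polynomial.X ^ 2 : Polynomial ℤ) ∣
      (Polynomial.X - (1 - (1 - Polynomial.X ^ k) ^ k)) := by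
    set P : Polynomial ℤ := 1 - (1 - Polynomial.X ^ k) ^ k with hP
    have H₁ : (Polynomial.X : Polynomial ℤ) ∣ P := by
      have := sub_dvd_pow_sub_pow 1 ((1 : Polynomial ℤ) - Polynomial.X ^ k) k
      rw [sub_sub_cancel, one_pow] at this
      exact dvd_trans (dvd_pow_self _ hk0) this
    have H₂ : ((1 : Polynomial ℤ) - Polynomial.X) ∣ 1 - P := by
      rw [hP, sub_sub_cancel]
      have h1 : ((1 : Polynomial ℤ) - Polynomial.X) ∣ 1 - Polynomial.X ^ k := by
        have := sub_dvd_pow_sub_pow (1 : Polynomial ℤ) Polynomial.X k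
        rwa [one_pow] at this
      exact dvd_trans h1 (dvd_pow_self _ hk0)
    have key : (Polynomial.X : Polynomial ℤ) - P =
        Polynomial.X * (1 - P) - (1 - Polynomial.X) * P := by ring
    rw [key]
    have d1 : (Polynomial.X - Polynomial.X ^ 2 : Polynomial ℤ) ∣ Polynomial.X * (1 - P) := by
      have hx : (Polynomial.X - Polynomial.X ^ 2 : Polynomial ℤ) =
          Polynomial.X * (1 - Polynomial.X) := by ring
      rw [hx]
      exact mul_dvd_mul_left _ H₂
    have d2 : (Polynomial.X - Polynomial.X ^ 2 : Polynomial ℤ) ∣ (1 - Polynomial.X) * P := by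
      have hx : (Polynomial.X - Polynomial.X ^ 2 : Polynomial ℤ) =
          (1 - Polynomial.X) * Polynomial.X := by ring
      rw [hx]
      exact mul_dvd_mul_left _ H₁
    exact dvd_sub d1 d2
  have hnilbe : IsNilpotent (b - e) := by
    have hdvd' := pow_dvd_pow_of_dvd hdvd k
    have hmap := map_dvd (Polynomial.aeval b) hdvd'
    simp only [map_pow, map_sub, map_one, Polynomial.aeval_X, Polynomial.aeval_one] at hmap
    rw [hm1, zero_dvd_iff] at hmap
    exact ⟨k, by rw [he_def]; exact hmap⟩
  refine ⟨e, b - e, ?_, hnilbe, ?_, by abel⟩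
  · rw [pow_two]; exact he.eq
  · exact (hcbe.symm.sub_right (Commute.refl e)).eq

/-- In a complex Banach algebra with identity, `b` is strongly Drazin invertible iff
`b - b ^ 2` is nilpotent, iff `b` is the sum of a commuting idempotent and nilpotent. -/
theorem sdrazin_tfae {A : Type*} [NormedRing A] [NormedAlgebra ℂ A] [CompleteSpace A]
    (b : A) :
    ((∃ y, IsSDrazinInv b y) ↔ IsNilpotent (b - b ^ 2)) ∧
    ((∃ y, IsSDrazinInv b y) ↔
      ∃ p n : A, p ^ 2 = p ∧ IsNilpotent n ∧ p * n = n * p ∧ b = p + n) := by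
  have h2 : (∃ y, IsSDrazinInv b y) ↔
      ∃ p n : A, p ^ 2 = p ∧ IsNilpotent n ∧ p * n = n * p ∧ b = p + n := by
    constructor
    · rintro ⟨y, hy⟩; exact decomp_of_sdrazin hy
    · rintro ⟨p, n, hp, hn, hpn, hb⟩; exact exists_sdrazin_of_decomp hp hn hpn hb
  refine ⟨?_, h2⟩
  rw [h2]
  constructor
  · rintro ⟨p, n, hp, hn, hpn, hb⟩
    have hp' : p * p = p := by rw [← pow_two]; exact hp
    have expand : (p + n) * (p + n) = p + p * n + n * p + n * n := by
      rw [add_mul, mul_add, mul_add, hp']; abel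
    have key : b - b ^ 2 = n * (1 - p - p - n) := calc
      b - b ^ 2 = (p + n) - (p + p * n + n * p + n * n) := by
        rw [hb, pow_two, expand]
      _ = n - n * p - n * p - n * n := by rw [hpn]; abel
      _ = n * (1 - p - p - n) := by rw [mul_sub, mul_sub, mul_sub, mul_one]
    rw [key]
    have hcnp : Commute n p := (show Commute p n from hpn).symm
    have hc : Commute n (1 - p - p - n) :=
      (((Commute.one_right n).sub_right hcnp).sub_right hcnp).sub_right (Commute.refl n)
    exact hc.isNilpotent_mul_right hn
  · exact fun h => decomp_of_nilpotent h
end
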